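/- arXiv:2107.01767 — 4 statements merged into one kernel-verified Lean document; each statement's English description precedes it below -/
import Mathlib

section
/- Let 1 ≤ l ≤ m ≤ n be integers. Then Σ_{k=1}^{n−l+1} #{π ∈ PF(m,n) : π_1 = k, π_2 = k+1, …, π_l = k+l−1} = (n−m+1)(n+1)^{m−l}. -/
open Finset

/-- Every entry lies in `{1, …, n}`. -/
def InRange (n : ℕ) (π : List ℕ) : Prop := ∀ x ∈ π, 1 ≤ x ∧ x ≤ n

/-- `π` is a parking function in `PF(π.length, n)`: all entries lie in `{1,…,n}` and
for every `i ≤ n`, at least `π.length + i - n` entries are `≤ i`. -/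
def IsPF (n : ℕ) (π : List ℕ) : Prop :=
  InRange n π ∧ ∀ i ≤ n, π.length + i - n ≤ π.countP (fun x => decide (x ≤ i))

/-- The parking process: each car `(a, b)` takes the first unoccupied spot in `[a, b]`;
returns the list of spots taken, or `none` if some car fails to park. -/
def parkAux : List (ℕ × ℕ) → Finset ℕ → Option (List ℕ)
  | [], _ => some []
  | c :: rest, occ =>
    if h : ((Finset.Icc c.1 c.2) \ occ).Nonempty then
      (parkAux rest (insert (((Finset.Icc c.1 c.2) \ occ).min' h) occ)).map
        (fun t => ((Finset.Icc c.1 c.2) \ occ).min' h :: t)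
    else none

/-- Outcome (list of spots taken, car by car) of the classical parking process with `n` spots. -/
def outcome (n : ℕ) (π : List ℕ) : Option (List ℕ) :=
  parkAux (π.map (fun p => (p, n))) ∅

/-- The `i`-th (1-indexed) unattempted spot of `π`, equivalently the `i`-th smallest
spot left unoccupied by the parking process. -/
def kspot (n : ℕ) (π : List ℕ) (i : ℕ) : ℕ :=
  (((Finset.Icc 1 n) \ ((outcome n π).getD []).toFinset).sort (· ≤ ·)).getD (i - 1) 0

/-- Spot (a value in `{1,…,n}`) in which car `i` (0-indexed) parks. -/
def outcomeCoord (n : ℕ) (π : List ℕ) (i : ℕ) : ℕ := ((outcome n π).getD []).getD i 0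

/-- Preference list (with values in `{1,…,n}`) associated to `π : Fin m → Fin n`. -/
def toPref {m n : ℕ} (π : Fin m → Fin n) : List ℕ := List.ofFn (fun k => (π k : ℕ) + 1)

/-- The `i`-th (0-indexed) preference, as a value in `{1,…,n}`. -/
def coord {m n : ℕ} (π : Fin m → Fin n) (i : ℕ) : ℕ :=
  if h : i < m then (π ⟨i, h⟩ : ℕ) + 1 else 0

open scoped Classical in
/-- The finite set of parking functions `PF(m, n)`. -/
noncomputable def PFset (m n : ℕ) : Finset (Fin m → Fin n) :=
  Finset.univ.filter (fun π => IsPF n (toPref π))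

/-- Expectation with respect to the uniform measure on `PF(m, n)`. -/
noncomputable def pfE (m n : ℕ) (f : (Fin m → Fin n) → ℝ) : ℝ :=
  (∑ π ∈ PFset m n, f π) / ((PFset m n).card : ℝ)

/-- Variance with respect to the uniform measure on `PF(m, n)`. -/
noncomputable def pfVar (m n : ℕ) (f : (Fin m → Fin n) → ℝ) : ℝ :=
  pfE m n (fun π => f π ^ 2) - (pfE m n f) ^ 2

/-- Covariance with respect to the uniform measure on `PF(m, n)`. -/
noncomputable def pfCov (m n : ℕ) (f g : (Fin m → Fin n) → ℝ) : ℝ :=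
  pfE m n (fun π => f π * g π) - pfE m n f * pfE m n g

/-- `π` is a `u`-parking function of length `r`: it consists of positive integers whose
non-decreasing rearrangement `lam` satisfies `lam i ≤ u i` for all `i`. -/
def IsUPF (r : ℕ) (u : Fin r → ℕ) (π : List ℕ) : Prop :=
  π.length = r ∧ (∀ x ∈ π, 1 ≤ x) ∧
    ∃ lam : List ℕ, π.Perm lam ∧ lam.Pairwise (· ≤ ·) ∧ ∀ i : Fin r, lam.getD i.val 0 ≤ u i

/-- `(a, b)` is an interval parking function in `IPF(a.length, n)`: car `i` is willing to
park only in the interval `[a i, b i]`, and all cars park successfully. -/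
def IsIPF (n : ℕ) (a b : List ℕ) : Prop :=
  a.length = b.length ∧ InRange n a ∧ InRange n b ∧ List.Forall₂ (· ≤ ·) a b ∧
    (parkAux (a.zip b) ∅).isSome = true

open scoped Classical in
/-- The finite set of interval parking functions `IPF(m, n)`. -/
noncomputable def IPFset (m n : ℕ) : Finset ((Fin m → Fin n) × (Fin m → Fin n)) :=
  Finset.univ.filter (fun ab => IsIPF n (toPref ab.1) (toPref ab.2))

/-! ### Auxiliary development: Pollak's circular argument via the cycle lemma -/


def Tsum (f : ℕ → ℤ) (x : ℕ) : ℤ := ∑ y ∈ Finset.range x, f y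

def Mmin (f : ℕ → ℤ) : ℕ → ℤ
  | 0 => 0
  | x + 1 => min (Mmin f x) (Tsum f (x + 1))

lemma Tsum_succ (f : ℕ → ℤ) (x : ℕ) : Tsum f (x + 1) = Tsum f x + f x :=
  Finset.sum_range_succ f x

lemma Mmin_le (f : ℕ → ℤ) {x y : ℕ} (h : y ≤ x) : Mmin f x ≤ Tsum f y := by
  induction x with
  | zero => interval_cases y; simp [Mmin, Tsum]
  | succ x ih =>
    rcases Nat.lt_or_ge y (x + 1) with hy | hy
    · exact le_trans (min_le_left _ _) (ih (Nat.lt_succ_iff.mp hy))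
    · have : y = x + 1 := le_antisymm h hy
      subst this; exact min_le_right _ _

lemma Mmin_mono (f : ℕ → ℤ) {x y : ℕ} (h : y ≤ x) : Mmin f x ≤ Mmin f y := by
  induction h with
  | refl => exact le_refl _
  | step h ih => exact le_trans (min_le_left _ _) ih

lemma exists_Mmin (f : ℕ → ℤ) (x : ℕ) : ∃ y ≤ x, Mmin f x = Tsum f y := by
  induction x with
  | zero => exact ⟨0, le_refl _, by simp [Mmin, Tsum]⟩
  | succ x ih =>
    obtain ⟨y, hy, hM⟩ := ih
    rcases le_or_gt (Mmin f x) (Tsum f (x + 1)) with h | h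
    · exact ⟨y, hy.trans (Nat.le_succ x), by rw [Mmin, min_eq_left h, hM]⟩
    · exact ⟨x + 1, le_refl _, by rw [Mmin, min_eq_right h.le]⟩

lemma Mmin_succ_record (f : ℕ → ℤ) (hf : ∀ x, -1 ≤ f x) (x : ℕ) :
    Mmin f (x + 1) = if Tsum f (x + 1) < Mmin f x then Mmin f x - 1 else Mmin f x := by
  have h1 : Tsum f x + f x ≥ Mmin f x - 1 := by
    have := Mmin_le f (le_refl x); have := hf x; omega
  split_ifs with h
  · rw [Tsum_succ] at h
    have : Tsum f x + f x = Mmin f x - 1 := by omega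
    show min (Mmin f x) (Tsum f (x+1)) = _
    rw [Tsum_succ, this]; omega
  · show min (Mmin f x) (Tsum f (x+1)) = _
    rw [Tsum_succ] at h ⊢; omega

lemma record_count (f : ℕ → ℤ) (hf : ∀ x, -1 ≤ f x) (a b : ℕ) (hab : a ≤ b) :
    ((Finset.Ico a b).filter (fun x => Tsum f (x + 1) < Mmin f x)).card =
      (Mmin f a - Mmin f b).toNat := by
  induction b with
  | zero => interval_cases a; simp
  | succ b ih =>
    rcases Nat.lt_or_ge a (b + 1) with h | h
    · have hab' : a ≤ b := Nat.lt_succ_iff.mp h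
      have hins : Finset.Ico a (b + 1) = insert b (Finset.Ico a b) := by
        rw [Nat.Ico_succ_right_eq_insert_Ico hab']
      have hnotin : b ∉ Finset.Ico a b := by simp
      have hMle : Mmin f b ≤ Mmin f a := Mmin_mono f hab'
      have hrec := Mmin_succ_record f hf b
      rw [hins, Finset.filter_insert]
      split_ifs with hb
      · rw [Finset.card_insert_of_notMem (fun hc => hnotin (Finset.mem_filter.mp hc).1),
          ih hab']
        rw [if_pos hb] at hrec; omega
      · rw [ih hab']
        rw [if_neg hb] at hrec; omega
    · have : a = b + 1 := le_antisymm hab h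
      subst this; simp

section Periodic
variable (f : ℕ → ℤ) (p s : ℕ)

lemma Tsum_period (hper : ∀ x, f (x + p) = f x) (hsum : Tsum f p = -(s : ℤ)) :
    ∀ x, Tsum f (x + p) = Tsum f x - s := by
  intro x
  induction x with
  | zero => simpa [Tsum] using hsum
  | succ x ih =>
    have : x + 1 + p = (x + p) + 1 := by omega
    rw [this, Tsum_succ, ih, hper, Tsum_succ]; ring

lemma Mmin_two_period (hp : 0 < p) (hs : 0 < s)
    (hper : ∀ x, f (x + p) = f x) (hsum : Tsum f p = -(s : ℤ)) :
    Mmin f (2 * p) = Mmin f p - s := by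
  have hT := Tsum_period f p s hper hsum
  apply le_antisymm
  · obtain ⟨y, hy, hM⟩ := exists_Mmin f p
    have : Mmin f (2 * p) ≤ Tsum f (y + p) := Mmin_le f (by omega)
    rw [hT y] at this; omega
  · obtain ⟨y, hy, hM⟩ := exists_Mmin f (2 * p)
    rcases le_or_gt y p with h | h
    · have := Mmin_le f (x := p) (y := y) h
      omega
    · have hy' : y - p + p = y := by omega
      have := hT (y - p)
      rw [hy'] at this
      have h2 := Mmin_le f (x := p) (y := y - p) (by omega)
      omega

/-- `Good f p x`: all circular-window sums of length `1..p` ending just before `x` are negative. -/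
def Good (x : ℕ) : Prop := ∀ i, 1 ≤ i → i ≤ p → Tsum f x < Tsum f (x - i)

lemma good_iff_record (hp : 0 < p) (hs : 0 < s)
    (hper : ∀ x, f (x + p) = f x) (hsum : Tsum f p = -(s : ℤ)) {x : ℕ} (hx : p ≤ x) :
    Good f p x ↔ Tsum f x < Mmin f (x - 1) := by
  have hT := Tsum_period f p s hper hsum
  constructor
  · intro hg
    have key : ∀ k, ∀ y, y < x → x - y ≤ k → Tsum f x < Tsum f y := by
      intro k
      induction k with
      | zero => intro y hy hk; omega
      | succ k ih =>
        intro y hy hk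
        rcases le_or_gt (x - y) p with h | h
        · have h2 := hg (x - y) (by omega) h
          have h3 : x - (x - y) = y := by omega
          rwa [h3] at h2
        · have h1 : Tsum f x < Tsum f (y + p) := ih (y + p) (by omega) (by omega)
          have := hT y
          omega
    obtain ⟨y, hy, hM⟩ := exists_Mmin f (x - 1)
    rw [hM]
    exact key x y (by omega) (by omega)
  · intro hr i hi1 hip
    exact lt_of_lt_of_le hr (Mmin_le f (by omega))

open scoped Classical in
/-- The cycle lemma: in a window of one full period, the number of "good" endpoints is `s`. -/
lemma cycle_lemma (hf : ∀ x, -1 ≤ f x) (hp : 0 < p) (hs : 0 < s)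
    (hper : ∀ x, f (x + p) = f x) (hsum : Tsum f p = -(s : ℤ)) :
    ((Finset.Ico p (2 * p)).filter (fun x => Good f p (x + 1))).card = s := by
  have heq : (Finset.Ico p (2 * p)).filter (fun x => Good f p (x + 1)) =
      (Finset.Ico p (2 * p)).filter (fun x => Tsum f (x + 1) < Mmin f x) := by
    apply Finset.filter_congr
    intro x hx
    simp only [Finset.mem_Ico] at hx
    have := good_iff_record f p s hp hs hper hsum (x := x + 1) (by omega)
    simpa using this
  rw [heq, record_count f hf p (2 * p) (by omega),
    Mmin_two_period f p s hp hs hper hsum]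
  omega

end Periodic

section PollakCore
variable {m n : ℕ}
local notation "p" => n + 1

lemma sum_c (σ : Fin m → ZMod p) :
    ∑ v : ZMod p, (Finset.univ.filter fun t => σ t = v).card = m := by
  classical
  rw [← Finset.card_eq_sum_card_fiberwise (fun t _ => Finset.mem_univ (σ t))]
  simp

lemma fiber_count (σ : Fin m → ZMod p) (w : ZMod p) (i : ℕ) :
    (Finset.univ.filter fun t => (w - σ t).val < i).card
      = ∑ v ∈ Finset.univ.filter (fun v : ZMod p => (w - v).val < i),
          (Finset.univ.filter fun t => σ t = v).card := by
  classical
  rw [Finset.card_eq_sum_card_fiberwise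
    (f := σ) (t := Finset.univ.filter (fun v : ZMod p => (w - v).val < i))
    (fun t ht => by
      simp only [Finset.mem_coe, Finset.mem_filter, Finset.mem_univ, true_and] at ht ⊢; exact ht)]
  apply Finset.sum_congr rfl
  intro v hv
  congr 1
  ext t
  simp only [Finset.mem_filter, Finset.mem_univ, true_and] at hv ⊢
  constructor
  · rintro ⟨_, h⟩; exact h
  · intro h; refine ⟨?_, h⟩; rw [h]; exact hv

lemma window_sum (σ : Fin m → ZMod p) (x i : ℕ) (hip : i ≤ p) (hx : i ≤ x + 1) :
    ∑ y ∈ Finset.Ico (x + 1 - i) (x + 1),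
        ((Finset.univ.filter fun t => σ t = ((y : ZMod p))).card : ℤ)
      = ((Finset.univ.filter fun t => (((x : ZMod p)) - σ t).val < i).card : ℤ) := by
  classical
  have key : ∀ y ∈ Finset.Ico (x + 1 - i) (x + 1), ((x : ZMod p) - (y : ZMod p)).val = x - y := by
    intro y hy
    simp only [Finset.mem_Ico] at hy
    have hyx : y ≤ x := by omega
    have h1 : ((x : ZMod p) - (y : ZMod p)) = ((x - y : ℕ) : ZMod p) := by
      rw [Nat.cast_sub hyx]
    rw [h1, ZMod.val_natCast, Nat.mod_eq_of_lt (by omega)]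
  rw [fiber_count σ ((x : ZMod p)) i, Nat.cast_sum]
  refine Finset.sum_nbij' (fun y => ((y : ZMod p)))
    (fun v => x - (((x : ZMod p)) - v).val) ?_ ?_ ?_ ?_ ?_
  · intro y hy
    simp only [Finset.mem_filter, Finset.mem_univ, true_and]
    rw [key y hy]
    simp only [Finset.mem_Ico] at hy
    omega
  · intro v hv
    simp only [Finset.mem_filter, Finset.mem_univ, true_and] at hv
    have hd : (((x : ZMod p)) - v).val < p := ZMod.val_lt _
    simp only [Finset.mem_Ico]
    omega
  · intro y hy
    rw [key y hy]
    simp only [Finset.mem_Ico] at hy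
    omega
  · intro v hv
    simp only [Finset.mem_filter, Finset.mem_univ, true_and] at hv
    have hd : (((x : ZMod p)) - v).val ≤ x := by
      have := ZMod.val_lt (((x : ZMod p)) - v); omega
    rw [Nat.cast_sub hd, ZMod.natCast_val, ZMod.cast_id]
    ring
  · intro y hy; rfl


def cfun (σ : Fin m → ZMod p) : ℕ → ℤ :=
  fun x => ((Finset.univ.filter fun t => σ t = ((x : ZMod p))).card : ℤ) - 1

lemma cfun_ge (σ : Fin m → ZMod p) (x : ℕ) : -1 ≤ cfun σ x := by
  have : (0 : ℤ) ≤ ((Finset.univ.filter fun t => σ t = ((x : ZMod p))).card : ℤ) :=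
    Int.natCast_nonneg _
  unfold cfun; omega

lemma cfun_per (σ : Fin m → ZMod p) (x : ℕ) : cfun σ (x + p) = cfun σ x := by
  unfold cfun
  congr 2
  push_cast
  simp

lemma cfun_sum (hmn : m ≤ n) (σ : Fin m → ZMod p) :
    Tsum (cfun σ) p = -(((p - m : ℕ)) : ℤ) := by
  unfold Tsum cfun
  rw [Finset.sum_sub_distrib]
  simp only [Finset.sum_const, Finset.card_range, nsmul_eq_mul, mul_one]
  have : ∑ y ∈ Finset.range p, ((Finset.univ.filter fun t => σ t = ((y : ZMod p))).card : ℤ)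
      = ((m : ℤ)) := by
    rw [← Nat.cast_sum]
    norm_cast
    refine Eq.trans ?_ (sum_c σ)
    refine Finset.sum_nbij' (fun y => ((y : ZMod p))) (fun v => v.val) ?_ ?_ ?_ ?_ ?_
    · intro a _; exact Finset.mem_univ _
    · intro v _; simp only [Finset.mem_range]; exact ZMod.val_lt v
    · intro a ha; simp only [Finset.mem_range] at ha
      rw [ZMod.val_natCast_of_lt ha]
    · intro v _; rw [ZMod.natCast_val, ZMod.cast_id]
    · intro a _; rfl
  rw [this]
  push_cast [Nat.cast_sub (by omega : m ≤ p)]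
  ring

lemma good_iff_count (hmn : m ≤ n) (σ : Fin m → ZMod p) (w : ZMod p) :
    Good (cfun σ) p (p + w.val + 1) ↔
      ∀ L, 1 ≤ L → L ≤ p →
        (Finset.univ.filter fun t => (w - σ t).val < L).card < L := by
  have hx : p ≤ p + w.val := Nat.le_add_right _ _
  have key : ∀ L, 1 ≤ L → L ≤ p →
      (Tsum (cfun σ) (p + w.val + 1) - Tsum (cfun σ) (p + w.val + 1 - L)
        = ((Finset.univ.filter fun t => (w - σ t).val < L).card : ℤ) - L) := by
    intro L hL1 hLp
    set x := p + w.val with hxdef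
    have hsub : Tsum (cfun σ) (x + 1) - Tsum (cfun σ) (x + 1 - L)
        = ∑ y ∈ Finset.Ico (x + 1 - L) (x + 1), cfun σ y := by
      rw [Finset.sum_Ico_eq_sub _ (by omega : x + 1 - L ≤ x + 1)]
      rfl
    rw [hsub]
    unfold cfun
    rw [Finset.sum_sub_distrib]
    rw [window_sum σ x L hLp (by omega)]
    have hcast : ((x : ℕ) : ZMod p) = w := by
      rw [hxdef]; push_cast; simp [ZMod.natCast_val, ZMod.cast_id]
    rw [hcast]
    simp only [Finset.sum_const, nsmul_eq_mul, mul_one, Nat.card_Ico]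
    congr 1
    omega
  constructor
  · intro hg L hL1 hLp
    have := hg L hL1 hLp
    have hk := key L hL1 hLp
    have : (0 : ℤ) < -(((Finset.univ.filter fun t => (w - σ t).val < L).card : ℤ) - L) := by
      omega
    exact_mod_cast by omega
  · intro hcnt i hi1 hip
    have hk := key i hi1 hip
    have := hcnt i hi1 hip
    have hlt : ((Finset.univ.filter fun t => (w - σ t).val < i).card : ℤ) < (i : ℤ) := by
      exact_mod_cast this
    omega

lemma pf_iff_count (hmn : m ≤ n) (σ : Fin m → ZMod p) (j : ZMod p) :
    (∀ i ≤ n, m + i - n ≤ (Finset.univ.filter fun t => (σ t + j).val < i).card) ↔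
      ∀ L, 1 ≤ L → L ≤ p →
        (Finset.univ.filter fun t => (((n : ZMod p) - j) - σ t).val < L).card < L := by
  classical
  set w := (n : ZMod p) - j with hw
  have hnv : ((n : ZMod p)).val = n := ZMod.val_natCast_of_lt (by omega)
  have hsplit : ∀ i : ℕ,
      (Finset.univ.filter fun t => (σ t + j).val < i).card
        + (Finset.univ.filter fun t => ¬ ((σ t + j).val < i)).card = m := by
    intro i
    rw [Finset.card_filter_add_card_filter_not]
    simp
  have hBC : ∀ i ≤ n,
      (Finset.univ.filter fun t => ¬ ((σ t + j).val < i)).card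
        = (Finset.univ.filter fun t => (w - σ t).val < p - i).card := by
    intro i hi
    congr 1
    apply Finset.filter_congr
    intro t _
    have hu : (σ t + j).val ≤ n := by have := ZMod.val_lt (σ t + j); omega
    have hwt : w - σ t = (n : ZMod p) - (σ t + j) := by rw [hw]; ring
    have hval : ((n : ZMod p) - (σ t + j)).val = n - (σ t + j).val := by
      rw [ZMod.val_sub (by rw [hnv]; exact hu), hnv]
    rw [hwt]
    simp only [hval, decide_eq_true_eq, eq_iff_iff]
    omega
  constructor
  · intro hpf L hL1 hLp
    have hi : p - L ≤ n := by omega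
    have h1 := hpf (p - L) hi
    have h2 := hsplit (p - L)
    have h3 := hBC (p - L) hi
    have hLL : p - (p - L) = L := by omega
    rw [hLL] at h3
    omega
  · intro hcnt i hi
    have h1 := hcnt (p - i) (by omega) (by omega)
    have h2 := hsplit i
    have h3 := hBC i hi
    omega

open scoped Classical in
lemma pollak (hmn : m ≤ n) (σ : Fin m → ZMod p) :
    (Finset.univ.filter fun j : ZMod p =>
        ∀ i ≤ n, m + i - n ≤ (Finset.univ.filter fun t => (σ t + j).val < i).card).card
      = n + 1 - m := by
  rw [← cycle_lemma (cfun σ) p (p - m) (cfun_ge σ) (by omega) (by omega)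
    (cfun_per σ) (cfun_sum hmn σ)]
  refine Finset.card_nbij' (fun j => p + ((n : ZMod p) - j).val)
    (fun x => (n : ZMod p) - ((x - p : ℕ) : ZMod p)) ?_ ?_ ?_ ?_
  · intro j hj
    simp only [Finset.mem_coe, Finset.mem_filter, Finset.mem_univ, true_and] at hj ⊢
    constructor
    · simp only [Finset.mem_Ico]
      have := ZMod.val_lt ((n : ZMod p) - j)
      omega
    · exact (good_iff_count hmn σ _).mpr ((pf_iff_count hmn σ j).mp hj)
  · intro x hx
    simp only [Finset.mem_coe, Finset.mem_filter, Finset.mem_univ, true_and, Finset.mem_Ico] at hx ⊢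
    obtain ⟨⟨hx1, hx2⟩, hg⟩ := hx
    set j := (n : ZMod p) - ((x - p : ℕ) : ZMod p) with hj
    have hwj : (n : ZMod p) - j = ((x - p : ℕ) : ZMod p) := by rw [hj]; ring
    have hv : ((x - p : ℕ) : ZMod p).val = x - p := ZMod.val_natCast_of_lt (by omega)
    have hX : p + ((n : ZMod p) - j).val = x := by rw [hwj, hv]; omega
    apply (pf_iff_count hmn σ j).mpr
    apply (good_iff_count hmn σ ((n : ZMod p) - j)).mp
    rw [hX]
    exact hg
  · intro j _
    simp only
    have : p + ((n : ZMod p) - j).val - p = ((n : ZMod p) - j).val := by omega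
    rw [this, ZMod.natCast_val, ZMod.cast_id]
    ring
  · intro x hx
    simp only [Finset.mem_coe, Finset.mem_filter, Finset.mem_Ico] at hx
    obtain ⟨⟨hx1, hx2⟩, _⟩ := hx
    simp only
    have h1 : (n : ZMod p) - ((n : ZMod p) - ((x - p : ℕ) : ZMod p)) = ((x - p : ℕ) : ZMod p) := by
      ring
    rw [h1, ZMod.val_natCast_of_lt (by omega)]
    omega


end PollakCore


def PFZ (n : ℕ) {m : ℕ} (σ : Fin m → ZMod (n + 1)) : Prop :=
  ∀ i ≤ n, m + i - n ≤ (Finset.univ.filter fun t => (σ t).val < i).card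

def BlockZ (l n : ℕ) {m : ℕ} (σ : Fin m → ZMod (n + 1)) : Prop :=
  ∀ i : ℕ, i < l → ∀ him : i < m, ∀ h0 : 0 < m, σ ⟨i, him⟩ = σ ⟨0, h0⟩ + (i : ZMod (n + 1))

lemma countP_ofFn {m : ℕ} (f : Fin m → ℕ) (q : ℕ → Bool) :
    (List.ofFn f).countP q = (Finset.univ.filter fun t => q (f t)).card := by
  rw [Finset.card_filter]
  induction m with
  | zero => simp
  | succ m ih =>
    rw [List.ofFn_succ, List.countP_cons, ih (fun t => f t.succ), Fin.sum_univ_succ]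
    by_cases h : q (f 0) <;> simp [h] <;> ring

lemma isPF_iff {m n : ℕ} (hmn : m ≤ n) (π : Fin m → Fin n) :
    IsPF n (toPref π) ↔
      ∀ i ≤ n, m + i - n ≤ (Finset.univ.filter fun t => (π t : ℕ) < i).card := by
  have hlen : (toPref π).length = m := by simp [toPref]
  have hcnt : ∀ i : ℕ, (toPref π).countP (fun x => decide (x ≤ i))
      = (Finset.univ.filter fun t => (π t : ℕ) < i).card := by
    intro i
    rw [toPref, countP_ofFn]
    congr 1
    apply Finset.filter_congr
    intro t _
    have := (π t).isLt
    simp only [decide_eq_true_eq, eq_iff_iff]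
    omega
  constructor
  · rintro ⟨_, h⟩ i hi
    have := h i hi
    rwa [hlen, hcnt] at this
  · intro h
    refine ⟨?_, ?_⟩
    · intro x hx
      rw [toPref, List.mem_ofFn] at hx
      obtain ⟨t, rfl⟩ := hx
      have := (π t).isLt
      omega
    · intro i hi
      rw [hlen, hcnt]
      exact h i hi

section Main
variable {l m n : ℕ}

/-- no-wrap lemma -/
lemma blockZ_val {σ : Fin m → ZMod (n + 1)} (hσ : BlockZ l n σ)
    (hval : ∀ t, (σ t).val < n) {i : ℕ} (hi : i < l) (him : i < m) (h0 : 0 < m) :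
    (σ ⟨i, him⟩).val = (σ ⟨0, h0⟩).val + i := by
  induction i with
  | zero => rfl
  | succ i ih =>
    have him' : i < m := by omega
    have hiv : (σ ⟨i, him'⟩).val = (σ ⟨0, h0⟩).val + i := ih (by omega) him'
    have hstep : σ ⟨i + 1, him⟩ = σ ⟨i, him'⟩ + 1 := by
      rw [hσ (i+1) hi him h0, hσ i (by omega) him' h0]
      push_cast
      ring
    have hlt : (σ ⟨i, him'⟩).val + 1 < n + 1 := by have := hval ⟨i, him'⟩; omega
    have : σ ⟨i, him'⟩ + 1 = (((σ ⟨i, him'⟩).val + 1 : ℕ) : ZMod (n + 1)) := by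
      push_cast [ZMod.natCast_val, ZMod.cast_id]
      ring
    rw [hstep, this, ZMod.val_natCast_of_lt hlt, hiv]
    omega

lemma pfz_val {σ : Fin m → ZMod (n + 1)} (hmn : m ≤ n) (hσ : PFZ n σ) (t : Fin m) :
    (σ t).val < n := by
  classical
  have h := hσ n (le_refl n)
  have hm : m + n - n = m := by omega
  rw [hm] at h
  have hle : (Finset.univ.filter fun t => (σ t).val < n).card ≤ m := by
    calc _ ≤ (Finset.univ : Finset (Fin m)).card := Finset.card_filter_le _ _
    _ = m := by simp
  have : (Finset.univ.filter fun t => (σ t).val < n) = Finset.univ := by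
    apply Finset.eq_univ_of_card
    simp only [Finset.card_univ, Fintype.card_fin]
    omega
  have := Finset.mem_filter.mp (this ▸ Finset.mem_univ t)
  exact this.2
end Main

section Main2
variable {l m n : ℕ}

lemma coord_eq {m n : ℕ} (π : Fin m → Fin n) {i : ℕ} (h : i < m) :
    coord π i = (π ⟨i, h⟩ : ℕ) + 1 := dif_pos h

open scoped Classical in
lemma cardC_eq_cardB (hl : 1 ≤ l) (hlm : l ≤ m) (hmn : m ≤ n) :
    ((PFset m n).filter (fun π => ∀ i : Fin l, coord π i.val = coord π 0 + i.val)).card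
      = (Finset.univ.filter
          (fun σ : Fin m → ZMod (n + 1) => BlockZ l n σ ∧ PFZ n σ)).card := by
  have h0 : 0 < m := by omega
  have hn0 : 0 < n := by omega
  refine Finset.card_nbij' (fun π => fun t => ((π t : ℕ) : ZMod (n + 1)))
    (fun σ => fun t => if h : (σ t).val < n then ⟨(σ t).val, h⟩ else ⟨0, hn0⟩) ?_ ?_ ?_ ?_
  · intro π hπ
    rw [Finset.mem_coe, Finset.mem_filter] at hπ
    obtain ⟨hπ1, hπ2⟩ := hπ
    rw [PFset, Finset.mem_filter] at hπ1
    obtain ⟨-, hpf⟩ := hπ1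
    rw [Finset.mem_coe, Finset.mem_filter]
    refine ⟨Finset.mem_univ _, ?_, ?_⟩
    · intro i hi him h0'
      have hbi : coord π i = coord π 0 + i := by simpa using hπ2 ⟨i, hi⟩
      rw [coord_eq π him, coord_eq π h0'] at hbi
      show ((π ⟨i, him⟩ : ℕ) : ZMod (n + 1)) = ((π ⟨0, h0'⟩ : ℕ) : ZMod (n + 1)) + (i : ZMod (n + 1))
      have : (π ⟨i, him⟩ : ℕ) = (π ⟨0, h0'⟩ : ℕ) + i := by omega
      rw [this]
      push_cast
      ring
    · intro i hi
      have := (isPF_iff hmn π).mp hpf i hi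
      convert this using 2
      apply Finset.filter_congr
      intro t _
      have := (π t).isLt
      rw [ZMod.val_natCast_of_lt (by omega)]
  · intro σ hσ
    rw [Finset.mem_coe, Finset.mem_filter] at hσ
    obtain ⟨-, hblock, hpfz⟩ := hσ
    have hval : ∀ t, (σ t).val < n := pfz_val hmn hpfz
    rw [Finset.mem_coe, Finset.mem_filter]
    constructor
    · rw [PFset, Finset.mem_filter]
      refine ⟨Finset.mem_univ _, ?_⟩
      apply (isPF_iff hmn _).mpr
      intro i hi
      convert hpfz i hi using 2
      apply Finset.filter_congr
      intro t _
      beta_reduce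
      rw [dif_pos (hval t)]
    · intro i
      have him : (i : ℕ) < m := by omega
      have hbv := blockZ_val hblock hval i.isLt him h0
      rw [coord_eq _ him, coord_eq _ h0]
      beta_reduce
      rw [dif_pos (hval ⟨(i : ℕ), him⟩), dif_pos (hval ⟨0, h0⟩)]
      simp only
      omega
  · intro π hπ
    funext t
    have hlt := (π t).isLt
    beta_reduce
    have hv : ((((π t : ℕ)) : ZMod (n + 1))).val = (π t : ℕ) :=
      ZMod.val_natCast_of_lt (by omega)
    rw [dif_pos (show (((π t : ℕ) : ZMod (n + 1))).val < n by rw [hv]; exact hlt)]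
    apply Fin.ext
    simp only [hv]
  · intro σ hσ
    rw [Finset.mem_coe, Finset.mem_filter] at hσ
    obtain ⟨-, hblock, hpfz⟩ := hσ
    have hval : ∀ t, (σ t).val < n := pfz_val hmn hpfz
    funext t
    beta_reduce
    rw [dif_pos (hval t)]
    simp only [ZMod.natCast_val, ZMod.cast_id]

open scoped Classical in
lemma cardS_eq (hl : 1 ≤ l) (hlm : l ≤ m) :
    (Finset.univ.filter (fun σ : Fin m → ZMod (n + 1) => BlockZ l n σ)).card
      = (n + 1) ^ (m - l + 1) := by
  have h0 : 0 < m := by omega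
  have hcard : (Finset.univ.filter (fun σ : Fin m → ZMod (n + 1) => BlockZ l n σ)).card
      = (Finset.univ : Finset (ZMod (n + 1) × (Fin (m - l) → ZMod (n + 1)))).card := by
    refine Finset.card_nbij'
      (fun σ => (σ ⟨0, h0⟩, fun t => σ ⟨l + t.val, by omega⟩))
      (fun ag => fun t => if h : t.val < l then ag.1 + (t.val : ZMod (n + 1))
          else ag.2 ⟨t.val - l, by omega⟩) ?_ ?_ ?_ ?_
    · intro σ _; exact Finset.mem_univ _
    · intro ag _
      rw [Finset.mem_coe, Finset.mem_filter]
      refine ⟨Finset.mem_univ _, ?_⟩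
      intro i hi him h0'
      beta_reduce
      rw [dif_pos (show (i : ℕ) < l from hi), dif_pos (show (0 : ℕ) < l from hl)]
      push_cast
      ring
    · intro σ hσ
      rw [Finset.mem_coe, Finset.mem_filter] at hσ
      obtain ⟨-, hb⟩ := hσ
      funext t
      beta_reduce
      by_cases h : (t : ℕ) < l
      · rw [dif_pos h]
        exact (hb t.val h t.isLt h0).symm
      · rw [dif_neg h]
        show σ ⟨l + ((t : ℕ) - l), by omega⟩ = σ t
        congr 1
        apply Fin.ext
        simp only [Fin.val_mk]
        omega
    · intro ag _
      refine Prod.ext ?_ ?_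
      · show (if h : (0 : ℕ) < l then ag.1 + ((0 : ℕ) : ZMod (n + 1))
            else ag.2 ⟨0 - l, by omega⟩) = ag.1
        rw [dif_pos (show (0 : ℕ) < l from hl)]
        simp
      · funext t
        show (if h : l + (t : ℕ) < l then ag.1 + ((l + (t : ℕ) : ℕ) : ZMod (n + 1))
            else ag.2 ⟨l + (t : ℕ) - l, by omega⟩) = ag.2 t
        rw [dif_neg (show ¬ (l + (t : ℕ) < l) by omega)]
        suffices h2 : (⟨l + (t : ℕ) - l, by omega⟩ : Fin (m - l)) = t by rw [h2]
        apply Fin.ext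
        show l + (t : ℕ) - l = (t : ℕ)
        omega

  rw [hcard, Finset.card_univ, Fintype.card_prod, Fintype.card_fun, ZMod.card, Fintype.card_fin,
    pow_succ, mul_comm]

open scoped Classical in
lemma cardB_mul (hl : 1 ≤ l) (hlm : l ≤ m) (hmn : m ≤ n) :
    (Finset.univ.filter
        (fun σ : Fin m → ZMod (n + 1) => BlockZ l n σ ∧ PFZ n σ)).card * (n + 1)
      = (n + 1) ^ (m - l + 1) * (n + 1 - m) := by
  have key : ∀ j : ZMod (n + 1),
      (Finset.univ.filter
        (fun σ : Fin m → ZMod (n + 1) => BlockZ l n σ ∧ PFZ n (fun t => σ t + j))).card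
      = (Finset.univ.filter
        (fun σ : Fin m → ZMod (n + 1) => BlockZ l n σ ∧ PFZ n σ)).card := by
    intro j
    refine Finset.card_nbij' (fun σ => fun t => σ t + j) (fun τ => fun t => τ t - j) ?_ ?_ ?_ ?_
    · intro σ hσ
      rw [Finset.mem_coe, Finset.mem_filter] at hσ ⊢
      obtain ⟨-, hb, hp⟩ := hσ
      refine ⟨Finset.mem_univ _, ?_, hp⟩
      intro i hi him h0'
      show σ ⟨i, him⟩ + j = σ ⟨0, h0'⟩ + j + (i : ZMod (n + 1))
      rw [hb i hi him h0']
      ring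
    · intro τ hτ
      rw [Finset.mem_coe, Finset.mem_filter] at hτ ⊢
      obtain ⟨-, hb, hp⟩ := hτ
      refine ⟨Finset.mem_univ _, ?_, ?_⟩
      · intro i hi him h0'
        show τ ⟨i, him⟩ - j = τ ⟨0, h0'⟩ - j + (i : ZMod (n + 1))
        rw [hb i hi him h0']
        ring
      · show PFZ n (fun t => τ t - j + j)
        have : (fun t => τ t - j + j) = τ := by funext t; ring
        rw [this]
        exact hp
    · intro σ _; funext t; show σ t + j - j = σ t; ring
    · intro τ _; funext t; show τ t - j + j = τ t; ring
  have swap :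
      ∑ j : ZMod (n + 1), (Finset.univ.filter
          (fun σ : Fin m → ZMod (n + 1) => BlockZ l n σ ∧ PFZ n (fun t => σ t + j))).card
        = ∑ σ ∈ Finset.univ.filter (fun σ : Fin m → ZMod (n + 1) => BlockZ l n σ),
            (Finset.univ.filter (fun j : ZMod (n + 1) => PFZ n (fun t => σ t + j))).card := by
    have h1 : ∀ j : ZMod (n + 1),
        (Finset.univ.filter
          (fun σ : Fin m → ZMod (n + 1) => BlockZ l n σ ∧ PFZ n (fun t => σ t + j)))
        = ((Finset.univ.filter (fun σ : Fin m → ZMod (n + 1) => BlockZ l n σ)).filter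
            (fun σ => PFZ n (fun t => σ t + j))) := by
      intro j
      rw [Finset.filter_filter]
    simp_rw [h1, Finset.card_filter]
    rw [Finset.sum_comm]
  have pol : ∀ σ : Fin m → ZMod (n + 1),
      (Finset.univ.filter (fun j : ZMod (n + 1) => PFZ n (fun t => σ t + j))).card
        = n + 1 - m := by
    intro σ
    have h := pollak hmn σ
    have e : (Finset.univ.filter (fun j : ZMod (n + 1) => PFZ n (fun t => σ t + j)))
        = (Finset.univ.filter (fun j : ZMod (n + 1) =>
            ∀ i ≤ n, m + i - n ≤ (Finset.univ.filter fun t => (σ t + j).val < i).card)) :=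
      Finset.filter_congr (fun j _ => Iff.rfl)
    rw [e]
    exact h
  calc (Finset.univ.filter
        (fun σ : Fin m → ZMod (n + 1) => BlockZ l n σ ∧ PFZ n σ)).card * (n + 1)
      = ∑ j : ZMod (n + 1), (Finset.univ.filter
          (fun σ : Fin m → ZMod (n + 1) => BlockZ l n σ ∧ PFZ n (fun t => σ t + j))).card := by
        rw [Finset.sum_congr rfl (fun j _ => key j), Finset.sum_const, Finset.card_univ,
          ZMod.card, smul_eq_mul, mul_comm]
    _ = ∑ σ ∈ Finset.univ.filter (fun σ : Fin m → ZMod (n + 1) => BlockZ l n σ),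
            (Finset.univ.filter (fun j : ZMod (n + 1) => PFZ n (fun t => σ t + j))).card := swap
    _ = (n + 1) ^ (m - l + 1) * (n + 1 - m) := by
        rw [Finset.sum_congr rfl (fun σ _ => pol σ), Finset.sum_const, smul_eq_mul,
          cardS_eq hl hlm]

end Main2

/-- Proposition 2.8. Summing the number of parking functions whose first
`l` coordinates are the contiguous block `k, …, k+l-1` over all such blocks. -/
theorem stmt_4 (l m n : ℕ) (hl : 1 ≤ l) (hlm : l ≤ m) (hmn : m ≤ n) :
    ∑ k ∈ Finset.Icc 1 (n - l + 1),
        ((PFset m n).filter (fun π => ∀ i : Fin l, coord π i.val = k + i.val)).card =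
      (n - m + 1) * (n + 1) ^ (m - l) := by
  classical
  have h0 : 0 < m := by omega
  have hmem : ∀ π ∈ (PFset m n).filter
      (fun π => ∀ i : Fin l, coord π i.val = coord π 0 + i.val),
      coord π 0 ∈ Finset.Icc 1 (n - l + 1) := by
    intro π hπ
    rw [Finset.mem_filter] at hπ
    obtain ⟨hpf, hrel⟩ := hπ
    have hrel' : coord π (l - 1) = coord π 0 + (l - 1) := by
      simpa using hrel ⟨l - 1, by omega⟩
    have hlt : (π ⟨l - 1, by omega⟩ : ℕ) < n := (π _).isLt
    rw [coord_eq π (show l - 1 < m by omega)] at hrel'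
    rw [coord_eq π h0] at hrel' ⊢
    rw [Finset.mem_Icc]
    omega
  have step1 : ∑ k ∈ Finset.Icc 1 (n - l + 1),
      ((PFset m n).filter (fun π => ∀ i : Fin l, coord π i.val = k + i.val)).card
      = ((PFset m n).filter
          (fun π => ∀ i : Fin l, coord π i.val = coord π 0 + i.val)).card := by
    rw [Finset.card_eq_sum_card_fiberwise hmem]
    apply Finset.sum_congr rfl
    intro k hk
    congr 1
    ext π
    rw [Finset.mem_filter, Finset.mem_filter, Finset.mem_filter]
    constructor
    · rintro ⟨hpf, hblk⟩
      have h00 : coord π 0 = k := by simpa using hblk ⟨0, by omega⟩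
      exact ⟨⟨hpf, fun i => by rw [hblk i, h00]⟩, h00⟩
    · rintro ⟨⟨hpf, hblk⟩, hk0⟩
      exact ⟨hpf, fun i => by rw [hblk i, hk0]⟩
  have step2 := cardC_eq_cardB hl hlm hmn
  have step3 := cardB_mul (n := n) hl hlm hmn
  have step4 : ((n + 1) : ℕ) ^ (m - l + 1) * (n + 1 - m)
      = ((n - m + 1) * (n + 1) ^ (m - l)) * (n + 1) := by
    have hnm : n + 1 - m = n - m + 1 := by omega
    rw [hnm, pow_succ]
    ring
  have hBcard : (Finset.univ.filter
      (fun σ : Fin m → ZMod (n + 1) => BlockZ l n σ ∧ PFZ n σ)).card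
      = (n - m + 1) * (n + 1) ^ (m - l) :=
    Nat.eq_of_mul_eq_mul_right (by omega) (step3.trans step4)
  rw [step1, step2, hBcard]
end

section
/- Let 1 ≤ l ≤ m ≤ n be integers and let v = (v_1,…,v_l) ∈ {1,…,n}^l be non-decreasing with all v_i elements of {n−m+1,…,n} (so that the set difference below has exactly m−l elements). Let u = (u_1,…,u_{m−l}) consist of the elements of {n−m+1,…,n} \ {v_1,…,v_l} arranged in increasing order. Then (v_1,…,v_l,π_{l+1},…,π_m) ∈ PF(m,n) if and only if (π_{l+1},…,π_m) ∈ PF(u), the set of u-parking functions of length m−l. -/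
open Finset

private lemma sorted_getElem_le' {lam : List ℕ} (hs : lam.Pairwise (· ≤ ·)) {i j : ℕ}
    (hij : i ≤ j) (hj : j < lam.length) : lam[i]'(lt_of_le_of_lt hij hj) ≤ lam[j] := by
  rcases eq_or_lt_of_le hij with rfl | h
  · exact le_refl _
  · exact List.pairwise_iff_getElem.mp hs i j (lt_of_le_of_lt hij hj) hj h

private lemma sorted_countP_le' {lam : List ℕ} (hs : lam.Pairwise (· ≤ ·)) {j : ℕ}
    (hj : j < lam.length) {t : ℕ} (ht : t < lam[j]) :
    lam.countP (fun x => decide (x ≤ t)) ≤ j := by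
  have h0 : lam.countP (fun x => decide (x ≤ t)) =
      (lam.take j).countP (fun x => decide (x ≤ t)) +
        (lam.drop j).countP (fun x => decide (x ≤ t)) := by
    rw [← List.countP_append, List.take_append_drop]
  have h1 : (lam.drop j).countP (fun x => decide (x ≤ t)) = 0 := by
    rw [List.countP_eq_zero]
    intro a ha
    obtain ⟨i, hi, rfl⟩ := List.mem_iff_getElem.mp ha
    rw [List.getElem_drop]
    have hji : j + i < lam.length := by
      rw [List.length_drop] at hi; omega
    have h2 : lam[j] ≤ lam[j + i] := sorted_getElem_le' hs (Nat.le_add_right j i) hji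
    simp only [decide_eq_true_eq]
    omega
  have h2 := List.countP_le_length (l := lam.take j) (p := fun x => decide (x ≤ t))
  rw [List.length_take] at h2
  have := Nat.min_le_left j lam.length
  omega

private lemma sorted_le_countP' {lam : List ℕ} (hs : lam.Pairwise (· ≤ ·)) {j : ℕ}
    (hj : j < lam.length) {t : ℕ} (ht : lam[j] ≤ t) :
    j + 1 ≤ lam.countP (fun x => decide (x ≤ t)) := by
  have h0 : lam.countP (fun x => decide (x ≤ t)) =
      (lam.take (j+1)).countP (fun x => decide (x ≤ t)) +
        (lam.drop (j+1)).countP (fun x => decide (x ≤ t)) := by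
    rw [← List.countP_append, List.take_append_drop]
  have h1 : (lam.take (j+1)).countP (fun x => decide (x ≤ t)) = (lam.take (j+1)).length := by
    rw [List.countP_eq_length]
    intro a ha
    obtain ⟨i, hi, rfl⟩ := List.mem_iff_getElem.mp ha
    have hi1 : i < j + 1 := lt_of_lt_of_le hi (by rw [List.length_take]; exact Nat.min_le_left _ _)
    rw [List.getElem_take]
    have h2 : lam[i] ≤ lam[j] := sorted_getElem_le' hs (by omega) hj
    simp only [decide_eq_true_eq]
    omega
  rw [List.length_take] at h1
  have h3 : min (j+1) lam.length = j + 1 := by omega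
  omega

private lemma countP_eq_card_filter' {L : List ℕ} (h : L.Nodup) (p : ℕ → Bool) :
    L.countP p = (L.toFinset.filter (fun x => p x = true)).card := by
  rw [← List.toFinset_filter, List.toFinset_card_of_nodup (h.filter p),
    List.countP_eq_length_filter]

private lemma upf_iff' {r : ℕ} {u : Fin r → ℕ} {π : List ℕ}
    (hlen : π.length = r) :
    IsUPF r u π ↔ (∀ x ∈ π, 1 ≤ x) ∧
      ∀ j : Fin r, (j : ℕ) + 1 ≤ π.countP (fun x => decide (x ≤ u j)) := by
  constructor
  · rintro ⟨-, hpos, lam, hperm, hsort, hle⟩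
    refine ⟨hpos, fun j => ?_⟩
    have hlamlen : lam.length = r := hperm.length_eq ▸ hlen
    have hjl : (j : ℕ) < lam.length := by rw [hlamlen]; exact j.2
    have h1 : lam[(j : ℕ)] ≤ u j := by
      have := hle j
      rwa [List.getD_eq_getElem lam 0 hjl] at this
    rw [hperm.countP_eq]
    exact sorted_le_countP' hsort hjl h1
  · rintro ⟨hpos, hc⟩
    refine ⟨hlen, hpos, π.mergeSort (fun a b => decide (a ≤ b)), (List.mergeSort_perm π _).symm,
      (List.pairwise_mergeSort (le := fun a b : ℕ => decide (a ≤ b)) (fun a b c h1 h2 => by simp only [decide_eq_true_eq] at *; omega) (fun a b => by simpa using Nat.le_total a b) π).imp (fun h => of_decide_eq_true h), fun j => ?_⟩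
    set lam := π.mergeSort (fun a b => decide (a ≤ b)) with hlam
    have hperm : π.Perm lam := (List.mergeSort_perm π _).symm
    have hlamlen : lam.length = r := hperm.length_eq ▸ hlen
    have hjl : (j : ℕ) < lam.length := by rw [hlamlen]; exact j.2
    rw [List.getD_eq_getElem lam 0 hjl]
    by_contra hcon
    push_neg at hcon
    have h1 := sorted_countP_le' ((List.pairwise_mergeSort (le := fun a b : ℕ => decide (a ≤ b)) (fun a b c h1 h2 => by simp only [decide_eq_true_eq] at *; omega) (fun a b => by simpa using Nat.le_total a b) π).imp (fun h => of_decide_eq_true h)) hjl hcon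
    rw [← hlam] at h1
    have h2 := hc j
    rw [hperm.countP_eq] at h2
    omega


/-- Proposition 2.10. Completing specified preferences `v_1, …, v_l` to a
parking function in `PF(m,n)` is equivalent to being a `u`-parking function, where `u`
consists of the elements of `{n-m+1, …, n} \ {v_1, …, v_l}` in increasing order. -/
theorem stmt_5 (l m n : ℕ) (hl : 1 ≤ l) (hlm : l ≤ m) (hmn : m ≤ n)
    (v : Fin l → ℕ) (hvmono : Monotone v) (hvrange : ∀ i, n - m + 1 ≤ v i ∧ v i ≤ n)
    (u : Fin (m - l) → ℕ) (humono : StrictMono u)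
    (hurange : Set.range u = Set.Icc (n - m + 1) n \ Set.range v)
    (π : List ℕ) (hπ : π.length = m - l) :
    IsPF n (List.ofFn v ++ π) ↔ IsUPF (m - l) u π := by
  have hvu_disj : ∀ x, x ∈ Set.range v → x ∉ Set.range u := by
    intro x hv hu'
    rw [hurange] at hu'; exact hu'.2 hv
  have hUcard : (Finset.univ.image u).card = m - l := by
    rw [Finset.card_image_of_injective _ humono.injective, Finset.card_univ, Fintype.card_fin]
  have hVA : (Finset.univ.image v) ⊆ Finset.Icc (n - m + 1) n := by
    intro x hx
    simp only [Finset.mem_image] at hx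
    obtain ⟨j, -, rfl⟩ := hx
    exact Finset.mem_Icc.mpr ⟨(hvrange j).1, (hvrange j).2⟩
  have hUeq : (Finset.univ.image u) = Finset.Icc (n - m + 1) n \ (Finset.univ.image v) := by
    apply Finset.coe_injective
    simp only [Finset.coe_sdiff, Finset.coe_image, Finset.coe_univ, Set.image_univ,
      Finset.coe_Icc]
    exact hurange
  have hAcard : (Finset.Icc (n - m + 1) n).card = m := by rw [Nat.card_Icc]; omega
  have hVcard : (Finset.univ.image v).card = l := by
    have h1 := Finset.card_sdiff_of_subset hVA
    rw [← hUeq, hUcard, hAcard] at h1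
    have h2 := Finset.card_image_le (s := (Finset.univ : Finset (Fin l))) (f := v)
    rw [Finset.card_univ, Fintype.card_fin] at h2
    omega
  have hvinj : Function.Injective v := by
    have h1 : (Finset.univ.image v).card = (Finset.univ : Finset (Fin l)).card := by
      rw [hVcard, Finset.card_univ, Fintype.card_fin]
    have h2 := Finset.card_image_iff.mp h1
    rw [Finset.coe_univ] at h2
    exact Set.injOn_univ.mp h2
  have hLnodup : (List.ofFn v ++ List.ofFn u).Nodup := by
    rw [List.nodup_append]
    refine ⟨List.nodup_ofFn.mpr hvinj, List.nodup_ofFn.mpr humono.injective, ?_⟩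
    intro a ha b hb hab
    subst hab
    rw [List.mem_ofFn] at ha hb
    exact hvu_disj a ha hb
  have hLto : (List.ofFn v ++ List.ofFn u).toFinset = Finset.Icc (n - m + 1) n := by
    ext x
    rw [List.mem_toFinset, List.mem_append, List.mem_ofFn, List.mem_ofFn, Finset.mem_Icc]
    constructor
    · rintro (h | h)
      · obtain ⟨j, rfl⟩ := h; exact ⟨(hvrange j).1, (hvrange j).2⟩
      · have h : x ∈ Set.range u := h; rw [hurange] at h; exact ⟨h.1.1, h.1.2⟩
    · intro hx
      by_cases h : x ∈ Set.range v
      · exact Or.inl h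
      · exact Or.inr (by show x ∈ Set.range u; rw [hurange]; exact ⟨Set.mem_Icc.mpr ⟨hx.1, hx.2⟩, h⟩)
  have hkey : ∀ i ≤ n,
      (List.ofFn v).countP (fun x => decide (x ≤ i)) +
        (List.ofFn u).countP (fun x => decide (x ≤ i)) = m + i - n := by
    intro i hi
    rw [← List.countP_append, countP_eq_card_filter' hLnodup, hLto]
    have heq : (Finset.Icc (n - m + 1) n).filter (fun x => decide (x ≤ i) = true) =
        Finset.Icc (n - m + 1) i := by
      ext y
      simp only [Finset.mem_filter, Finset.mem_Icc, decide_eq_true_eq]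
      omega
    rw [heq, Nat.card_Icc]
    omega
  have hLUsorted : (List.ofFn u).Pairwise (· ≤ ·) :=
    List.pairwise_ofFn.mpr (fun i j h => (humono h).le)
  have hub : ∀ j, n - m + 1 ≤ u j ∧ u j ≤ n := by
    intro j
    have hj : u j ∈ Set.range u := ⟨j, rfl⟩
    rw [hurange] at hj
    exact ⟨hj.1.1, hj.1.2⟩
  have hLUlen : (List.ofFn u).length = m - l := List.length_ofFn
  have hlenL : (List.ofFn v ++ π).length = m := by
    rw [List.length_append, List.length_ofFn, hπ]; omega
  constructor
  · rintro ⟨hr, hc⟩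
    rw [upf_iff' hπ]
    refine ⟨fun x hx => (hr x (List.mem_append_right _ hx)).1, fun j => ?_⟩
    have hcount : ∀ i ≤ n, (List.ofFn u).countP (fun x => decide (x ≤ i)) ≤
        π.countP (fun x => decide (x ≤ i)) := by
      intro i hi
      have h1 := hc i hi
      rw [List.countP_append, hlenL] at h1
      have h3 := hkey i hi
      omega
    have h4 := hcount (u j) (hub j).2
    have h5 : (j : ℕ) + 1 ≤ (List.ofFn u).countP (fun x => decide (x ≤ u j)) := by
      have hjl : (j : ℕ) < (List.ofFn u).length := by rw [hLUlen]; exact j.2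
      refine sorted_le_countP' hLUsorted hjl ?_
      rw [List.getElem_ofFn]
    omega
  · intro h
    obtain ⟨hpos, hj⟩ := (upf_iff' hπ).mp h
    have hP2 : ∀ i ≤ n, (List.ofFn u).countP (fun x => decide (x ≤ i)) ≤
        π.countP (fun x => decide (x ≤ i)) := by
      intro i hi
      set c := (List.ofFn u).countP (fun x => decide (x ≤ i)) with hcdef
      rcases Nat.eq_zero_or_pos c with h0 | h0
      · omega
      · have hcle : c ≤ m - l := by
          have hh := List.countP_le_length (l := List.ofFn u) (p := fun x => decide (x ≤ i))
          rw [hLUlen] at hh; omega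
        have hclt : c - 1 < (List.ofFn u).length := by rw [hLUlen]; omega
        have hclt' : c - 1 < m - l := by omega
        set j0 : Fin (m - l) := ⟨c - 1, hclt'⟩ with hj0
        have hule : u j0 ≤ i := by
          by_contra hcon
          push_neg at hcon
          have hcc := sorted_countP_le' hLUsorted hclt
            (by rw [List.getElem_ofFn]; exact hcon)
          omega
        have h5 := hj j0
        have h6 : π.countP (fun x => decide (x ≤ u j0)) ≤
            π.countP (fun x => decide (x ≤ i)) := by
          apply List.countP_mono_left
          intro x hx hxu
          simp only [decide_eq_true_eq] at hxu ⊢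
          omega
        have hj0v : (j0 : ℕ) = c - 1 := rfl
        omega
    have hcn : π.countP (fun x => decide (x ≤ n)) = π.length := by
      have h1 := hP2 n le_rfl
      have h2 : (List.ofFn u).countP (fun x => decide (x ≤ n)) = m - l := by
        rw [List.countP_eq_length.mpr ?_, hLUlen]
        intro a ha
        rw [List.mem_ofFn] at ha
        obtain ⟨j, rfl⟩ := ha
        simp only [decide_eq_true_eq]
        exact (hub j).2
      have h3 := List.countP_le_length (l := π) (p := fun x => decide (x ≤ n))
      omega
    have hle_n : ∀ x ∈ π, x ≤ n := by
      intro x hx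
      have hh := List.countP_eq_length.mp hcn x hx
      simpa using hh
    refine ⟨?_, ?_⟩
    · intro x hx
      rcases List.mem_append.mp hx with h1 | h1
      · rw [List.mem_ofFn] at h1
        obtain ⟨j, rfl⟩ := h1
        exact ⟨by have := (hvrange j).1; omega, (hvrange j).2⟩
      · exact ⟨hpos x h1, hle_n x h1⟩
    · intro i hi
      rw [List.countP_append, hlenL]
      have h1 := hkey i hi
      have h2 := hP2 i hi
      omega
end

section
/- Let 0 ≤ m < n, 1 ≤ i ≤ n−m, and i ≤ k ≤ m+i be integers, and let PF(m,n;i,k) = {π ∈ PF(m,n) : k_i(π) = k}. Let π_2,…,π_m ∈ {1,…,n} and j ∈ {1,…,n}. Then (j,π_2,…,π_m) ∈ PF(m,n;i,k) and (j+1,π_2,…,π_m) ∉ PF(m,n;i,k) if and only if one of the following holds: (1) i ≤ j ≤ k−1 and (π_2,…,π_m) is a parking function multi-shuffle of α ∈ PF(j−i, j−1), β ∈ PF(k−j−1, k−j−1), and γ ∈ PF(m−k+i, n−k) (with offsets j and k); or (2) j ≥ n−m−i+k+1 and (π_2,…,π_m) is a parking function multi-shuffle of α ∈ PF(k−i, k−1),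 β ∈ PF(j−k−1−n+m+i, j−k−1), and γ ∈ PF(n−j, n−j) (with offsets k and j). -/
open Finset

namespace PFaux


/-- number of entries of `l` in the interval `[t, s]`. -/
def cntI (l : List ℕ) (t s : ℕ) : ℕ := l.countP (fun x => decide (t ≤ x ∧ x ≤ s))

@[simp] lemma cntI_nil (t s : ℕ) : cntI [] t s = 0 := rfl

lemma cntI_cons (a : ℕ) (l : List ℕ) (t s : ℕ) :
    cntI (a :: l) t s = cntI l t s + (if t ≤ a ∧ a ≤ s then 1 else 0) := by
  simp [cntI, List.countP_cons]

lemma cntI_perm {l l' : List ℕ} (h : l.Perm l') (t s : ℕ) : cntI l t s = cntI l' t s :=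
  h.countP_eq _

lemma cntI_append (l l' : List ℕ) (t s : ℕ) :
    cntI (l ++ l') t s = cntI l t s + cntI l' t s := by
  simp [cntI, List.countP_append]

lemma cntI_le_length (l : List ℕ) (t s : ℕ) : cntI l t s ≤ l.length :=
  List.countP_le_length

lemma cntI_mono (l : List ℕ) {t t' s s' : ℕ} (ht : t' ≤ t) (hs : s ≤ s') :
    cntI l t s ≤ cntI l t' s' := by
  apply List.countP_mono_left
  intro x _ h
  simp only [decide_eq_true_eq] at h ⊢
  omega

lemma cntI_split (l : List ℕ) {t r s : ℕ} (h1 : t ≤ r + 1) (h2 : r ≤ s) :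
    cntI l t s = cntI l t r + cntI l (r + 1) s := by
  induction l with
  | nil => rfl
  | cons a l ih =>
    simp only [cntI_cons, ih]
    split_ifs <;> omega

lemma cntI_eq_zero {l : List ℕ} {t s : ℕ} (h : ∀ x ∈ l, ¬(t ≤ x ∧ x ≤ s)) :
    cntI l t s = 0 := by
  rw [cntI, List.countP_eq_zero]
  intro x hx
  simpa using h x hx

/-- the spot `s` is occupied after parking the preference list `l` (formula version). -/
def occF (l : List ℕ) (s : ℕ) : Prop := ∃ t, 1 ≤ t ∧ t ≤ s ∧ s + 1 ≤ cntI l t s + t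

lemma not_occF_iff {l : List ℕ} {s : ℕ} :
    ¬ occF l s ↔ ∀ t, 1 ≤ t → t ≤ s → cntI l t s + t ≤ s := by
  unfold occF
  push_neg
  constructor
  · intro h t h1 h2; have := h t h1 h2; omega
  · intro h t h1 h2; have := h t h1 h2; omega

lemma occF_mono {l l' : List ℕ} (h : ∀ t s, cntI l t s ≤ cntI l' t s) {s : ℕ}
    (hs : occF l s) : occF l' s := by
  obtain ⟨t, h1, h2, h3⟩ := hs
  exact ⟨t, h1, h2, le_trans h3 (by have := h t s; omega)⟩

lemma occF_cons_of {a : ℕ} {l : List ℕ} {s : ℕ} (h : occF l s) : occF (a :: l) s := by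
  apply occF_mono (fun t s => ?_) h
  rw [cntI_cons]; omega

/-- chain lemma: if every spot in `[c, s]` is occupied then some interval `[t, s]`
with `t ≤ c` is over-full. -/
lemma chain (l : List ℕ) : ∀ s, ∀ c, 1 ≤ c → c ≤ s → (∀ x, c ≤ x → x ≤ s → occF l x) →
    ∃ t, 1 ≤ t ∧ t ≤ c ∧ s + 1 ≤ cntI l t s + t := by
  intro s
  induction s using Nat.strong_induction_on with
  | _ s ih =>
    intro c hc1 hcs hall
    obtain ⟨t₁, ht1, ht2, ht3⟩ := hall s hcs (le_refl s)
    by_cases hle : t₁ ≤ c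
    · exact ⟨t₁, ht1, hle, ht3⟩
    · push_neg at hle
      have hlt : t₁ - 1 < s := by omega
      obtain ⟨t, h1, h2, h3⟩ := ih (t₁ - 1) hlt c hc1 (by omega)
        (fun x hx1 hx2 => hall x hx1 (by omega))
      refine ⟨t, h1, h2, ?_⟩
      have hsplit : cntI l t s = cntI l t (t₁ - 1) + cntI l t₁ s := by
        have := cntI_split l (t := t) (r := t₁ - 1) (s := s) (by omega) (by omega)
        rw [this]; congr 2; omega
      omega


/-- Adding one car with preference `a`: the new occupied-spot predicate adds exactly the
first vacant spot `u ≥ a`. -/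
lemma occF_cons_iff {a u : ℕ} {l : List ℕ} (ha : 1 ≤ a) (hau : a ≤ u)
    (huv : ¬ occF l u) (hmin : ∀ x, a ≤ x → x < u → occF l x) (s : ℕ) (hs : 1 ≤ s) :
    occF (a :: l) s ↔ occF l s ∨ s = u := by
  constructor
  · rintro ⟨t, h1, h2, h3⟩
    rw [cntI_cons] at h3
    by_cases hm : t ≤ a ∧ a ≤ s
    · -- the new car is counted
      by_contra hcon
      push_neg at hcon
      obtain ⟨hno, hne⟩ := hcon
      have hvs : ∀ t', 1 ≤ t' → t' ≤ s → cntI l t' s + t' ≤ s := not_occF_iff.mp hno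
      rcases lt_trichotomy s u with hlt | heq | hgt
      · -- s < u and s ≥ a : contradiction with hmin
        exact hno (hmin s hm.2 hlt)
      · exact hne heq
      · -- s > u : count bound via splitting at u
        have hvu : ∀ t', 1 ≤ t' → t' ≤ u → cntI l t' u + t' ≤ u := not_occF_iff.mp huv
        have htu : t ≤ u := le_trans hm.1 hau
        have hs1 : cntI l t s = cntI l t u + cntI l (u+1) s := cntI_split l (by omega) (by omega)
        have hb1 : cntI l t u + t ≤ u := hvu t h1 htu
        have hb2 : cntI l (u+1) s + (u+1) ≤ s := hvs (u+1) (by omega) (by omega)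
        simp only [if_pos hm] at h3
        omega
    · -- new car not counted : occF l s directly
      simp only [if_neg hm] at h3
      exact Or.inl ⟨t, h1, h2, by omega⟩
  · rintro (h | h)
    · exact occF_cons_of h
    · subst h
      by_cases hua : s = a
      · refine ⟨a, ha, by omega, ?_⟩
        rw [cntI_cons, if_pos ⟨le_refl a, by omega⟩]
        omega
      · have hlt : a ≤ s - 1 := by omega
        obtain ⟨t, h1, h2, h3⟩ := chain l (s-1) a ha hlt
          (fun x hx1 hx2 => hmin x hx1 (by omega))
        refine ⟨t, h1, by omega, ?_⟩
        have hmon : cntI l t (s-1) ≤ cntI l t s := by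
          apply List.countP_mono_left
          intro x _ hx
          simp only [decide_eq_true_eq] at hx ⊢
          omega
        rw [cntI_cons, if_pos ⟨by omega, by omega⟩]
        omega

lemma occF_congr {l l' : List ℕ} (h : l.Perm l') (s : ℕ) : occF l s ↔ occF l' s := by
  unfold occF
  constructor <;> rintro ⟨t, h1, h2, h3⟩ <;> exact ⟨t, h1, h2, by rw [cntI_perm h] at *; omega⟩

lemma parkAux_snoc (l : List (ℕ × ℕ)) (c : ℕ × ℕ) : ∀ occ : Finset ℕ,
    parkAux (l ++ [c]) occ = (parkAux l occ).bind (fun o =>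
      if h : ((Finset.Icc c.1 c.2) \ (occ ∪ o.toFinset)).Nonempty then
        some (o ++ [((Finset.Icc c.1 c.2) \ (occ ∪ o.toFinset)).min' h]) else none) := by
  induction l with
  | nil =>
    intro occ
    simp only [List.nil_append, parkAux, Option.bind]
    simp
  | cons d l ih =>
    intro occ
    simp only [List.cons_append, parkAux]
    by_cases h : ((Finset.Icc d.1 d.2) \ occ).Nonempty
    · rw [dif_pos h, dif_pos h]
      rw [ih]
      set u := ((Finset.Icc d.1 d.2) \ occ).min' h with hu
      cases hpark : parkAux l (insert u occ) with
      | none => simp [hpark]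
      | some o =>
        simp only [hpark, Option.map_some, Option.bind_some, Option.bind_some]
        have hset : insert u occ ∪ o.toFinset = occ ∪ (u :: o).toFinset := by
          simp [List.toFinset_cons]
        rw [hset]
        by_cases h2 : ((Finset.Icc c.1 c.2) \ (occ ∪ (u :: o).toFinset)).Nonempty
        · rw [dif_pos h2, dif_pos h2]; simp
        · rw [dif_neg h2, dif_neg h2]; simp
    · rw [dif_neg h, dif_neg h]; simp

open scoped Classical in
theorem process (n : ℕ) : ∀ (l : List ℕ), (∀ x ∈ l, 1 ≤ x ∧ x ≤ n) →
    (∀ t, 1 ≤ t → t ≤ n → cntI l t n + t ≤ n + 1) →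
    ∃ o : List ℕ, parkAux (l.map (fun p => (p, n))) ∅ = some o ∧ o.Nodup ∧
      o.length = l.length ∧ o.toFinset = (Finset.Icc 1 n).filter (fun s => occF l s) := by
  intro l
  induction l using List.reverseRecOn with
  | nil =>
    intro _ _
    refine ⟨[], rfl, List.nodup_nil, rfl, ?_⟩
    rw [eq_comm, Finset.filter_eq_empty_iff.2]
    · rfl
    · rintro s -
      rintro ⟨t, h1, h2, h3⟩
      simp [cntI] at h3
      omega
  | append_singleton l a ih =>
    intro hr hsc
    have hra : 1 ≤ a ∧ a ≤ n := hr a (by simp)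
    have hrl : ∀ x ∈ l, 1 ≤ x ∧ x ≤ n := fun x hx => hr x (by simp [hx])
    have hmono : ∀ t s, cntI l t s ≤ cntI (l ++ [a]) t s := by
      intro t s; rw [cntI_append]; omega
    have hscl : ∀ t, 1 ≤ t → t ≤ n → cntI l t n + t ≤ n + 1 := by
      intro t h1 h2; have := hsc t h1 h2; have := hmono t n; omega
    obtain ⟨o, ho, hnd, hlen, hset⟩ := ih hrl hscl
    rw [List.map_append, List.map_singleton, parkAux_snoc, ho, Option.bind_some]
    have hne : ((Finset.Icc a n) \ (∅ ∪ o.toFinset)).Nonempty := by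
      rw [Finset.empty_union]
      by_contra hcon
      rw [Finset.not_nonempty_iff_eq_empty, Finset.sdiff_eq_empty_iff_subset] at hcon
      have hallocc : ∀ x, a ≤ x → x ≤ n → occF l x := by
        intro x hx1 hx2
        have : x ∈ o.toFinset := hcon (Finset.mem_Icc.2 ⟨hx1, hx2⟩)
        rw [hset, Finset.mem_filter] at this
        exact this.2
      obtain ⟨t, h1, h2, h3⟩ := chain l n a hra.1 hra.2 hallocc
      have hc : cntI (l ++ [a]) t n = cntI l t n + 1 := by
        rw [cntI_append]
        have : cntI [a] t n = 1 := by
          rw [cntI_cons]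
          simp [cntI]
          omega
        omega
      have := hsc t h1 (le_trans h2 hra.2)
      omega
    rw [dif_pos hne]
    set u := ((Finset.Icc a n) \ (∅ ∪ o.toFinset)).min' hne with hudef
    have humem : u ∈ (Finset.Icc a n) \ (∅ ∪ o.toFinset) := Finset.min'_mem _ hne
    rw [Finset.empty_union] at humem
    have hu1 : a ≤ u ∧ u ≤ n := Finset.mem_Icc.1 (Finset.mem_sdiff.1 humem).1
    have hunotocc : ¬ occF l u := by
      have := (Finset.mem_sdiff.1 humem).2
      intro hocc
      exact this (by rw [hset, Finset.mem_filter]; exact ⟨Finset.mem_Icc.2 ⟨by omega, hu1.2⟩, hocc⟩)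
    have hmin : ∀ x, a ≤ x → x < u → occF l x := by
      intro x hx1 hx2
      by_contra hno
      have hxmem : x ∈ (Finset.Icc a n) \ (∅ ∪ o.toFinset) := by
        rw [Finset.empty_union, Finset.mem_sdiff]
        refine ⟨Finset.mem_Icc.2 ⟨hx1, by omega⟩, ?_⟩
        intro hmem
        rw [hset, Finset.mem_filter] at hmem
        exact hno hmem.2
      have := Finset.min'_le _ _ hxmem
      omega
    have hkey : ∀ s, 1 ≤ s → (occF (l ++ [a]) s ↔ occF l s ∨ s = u) := by
      intro s hs
      rw [occF_congr (List.perm_append_singleton a l) s]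
      exact occF_cons_iff hra.1 hu1.1 hunotocc hmin s hs
    refine ⟨o ++ [u], rfl, ?_, by simp [hlen], ?_⟩
    · refine List.Nodup.append hnd (List.nodup_singleton u) ?_
      intro x hx hx2
      rw [List.mem_singleton] at hx2
      subst hx2
      exact (Finset.mem_sdiff.1 humem).2 (List.mem_toFinset.2 hx)
    · ext s
      rw [List.toFinset_append, Finset.mem_union, hset]
      simp only [List.toFinset_cons, List.toFinset_nil, insert_empty_eq, Finset.mem_singleton,
        Finset.mem_filter, Finset.mem_Icc]
      constructor
      · rintro (⟨hs, hocc⟩ | hs)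
        · exact ⟨hs, (hkey s hs.1).2 (Or.inl hocc)⟩
        · subst hs
          exact ⟨⟨by omega, hu1.2⟩, (hkey u (by omega)).2 (Or.inr rfl)⟩
      · rintro ⟨hs, hocc⟩
        rcases (hkey s hs.1).1 hocc with h | h
        · exact Or.inl ⟨hs, h⟩
        · exact Or.inr h

lemma strictSorted_getD {L : List ℕ} (hL : L.Pairwise (· < ·)) : ∀ (p : ℕ) {k : ℕ}, 1 ≤ k →
    (L.getD p 0 = k ↔ k ∈ L ∧ L.countP (fun x => decide (x < k)) = p) := by
  induction L with
  | nil =>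
    intro p k hk
    simp only [List.getD_nil, List.not_mem_nil, false_and, iff_false]
    omega
  | cons x L ih =>
    rw [List.pairwise_cons] at hL
    obtain ⟨hx, hLs⟩ := hL
    intro p k hk
    cases p with
    | zero =>
      simp only [List.getD_cons_zero, List.countP_cons, List.mem_cons]
      constructor
      · rintro rfl
        refine ⟨Or.inl rfl, ?_⟩
        have h0 : L.countP (fun x_1 => decide (x_1 < x)) = 0 := by
          rw [List.countP_eq_zero]
          intro y hy
          simpa using le_of_lt (hx y hy)
        simp [h0]
      · rintro ⟨hmem, hcnt⟩
        rcases hmem with rfl | hmem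
        · rfl
        · exfalso
          have hxk : x < k := hx k hmem
          rw [if_pos (by simpa using hxk)] at hcnt
          omega
    | succ p =>
      simp only [List.getD_cons_succ]
      rw [ih hLs p hk]
      constructor
      · rintro ⟨hmem, hcnt⟩
        have hxk : x < k := hx k hmem
        refine ⟨List.mem_cons_of_mem _ hmem, ?_⟩
        rw [List.countP_cons_of_pos (by simpa using hxk)]
        omega
      · rintro ⟨hmem, hcnt⟩
        have hxk : x < k := by
          by_contra hcon
          push_neg at hcon
          have h0 : L.countP (fun y => decide (y < k)) = 0 := by
            rw [List.countP_eq_zero]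
            intro y hy
            have := hx y hy
            simp only [decide_eq_true_eq]
            omega
          rw [List.countP_cons, h0] at hcnt
          simp only [decide_eq_true_eq] at hcnt
          split_ifs at hcnt <;> omega
        have hmem' : k ∈ L := by
          rcases List.mem_cons.1 hmem with rfl | h
          · omega
          · exact h
        refine ⟨hmem', ?_⟩
        rw [List.countP_cons_of_pos (by simpa using hxk)] at hcnt
        omega

lemma countP_sort (W : Finset ℕ) (p : ℕ → Prop) [DecidablePred p] :
    (W.sort (· ≤ ·)).countP (fun v => decide (p v)) = (W.filter p).card := by
  have h1 : ((W.sort (· ≤ ·) : List ℕ) : Multiset ℕ) = W.val := Finset.sort_eq _ _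
  have h2 : Multiset.countP (fun v => decide (p v)) ((W.sort (· ≤ ·) : List ℕ) : Multiset ℕ)
      = Multiset.countP (fun v => decide (p v)) W.val := by rw [h1]
  simp only [decide_eq_true_eq] at h2
  rw [Multiset.coe_countP] at h2
  rw [h2, Multiset.countP_eq_card_filter]
  rfl

lemma sort_getD_eq_iff (W : Finset ℕ) {i k : ℕ} (hk : 1 ≤ k) :
    ((W.sort (· ≤ ·)).getD (i - 1) 0 = k ↔ k ∈ W ∧ (W.filter (fun v => v < k)).card = i - 1) := by
  rw [strictSorted_getD (Finset.sortedLT_sort W).pairwise (i-1) hk, Finset.mem_sort,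
    countP_sort W (fun v => v < k)]


/-- success counting condition. -/
def SCp (n : ℕ) (l : List ℕ) : Prop := ∀ t, 1 ≤ t → t ≤ n → cntI l t n + t ≤ n + 1

open scoped Classical in
/-- set of vacant (equivalently, unattempted) spots. -/
noncomputable def Vset (n : ℕ) (l : List ℕ) : Finset ℕ :=
  (Finset.Icc 1 n).filter (fun s => ¬ occF l s)

open scoped Classical in
lemma mem_Vset {n : ℕ} {l : List ℕ} {s : ℕ} :
    s ∈ Vset n l ↔ (1 ≤ s ∧ s ≤ n) ∧ ¬ occF l s := by
  simp [Vset, Finset.mem_filter, Finset.mem_Icc]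

lemma cntI_one_eq_length {n : ℕ} {l : List ℕ} (hr : InRange n l) : cntI l 1 n = l.length := by
  unfold cntI
  apply List.countP_eq_length.2
  intro x hx
  have := hr x hx
  simp only [decide_eq_true_eq]
  omega

lemma countP_le_eq_cntI {l : List ℕ} (hr : ∀ x ∈ l, 1 ≤ x) (i : ℕ) :
    l.countP (fun x => decide (x ≤ i)) = cntI l 1 i := by
  apply List.countP_congr
  intro x hx
  have := hr x hx
  simp only [decide_eq_true_eq]
  omega

lemma isPF_iff {n : ℕ} {l : List ℕ} : IsPF n l ↔ InRange n l ∧ SCp n l := by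
  constructor
  · rintro ⟨hr, hc⟩
    refine ⟨hr, fun t h1 h2 => ?_⟩
    have hc' := hc (t - 1) (by omega)
    rw [countP_le_eq_cntI (fun x hx => (hr x hx).1)] at hc'
    have hsplit : cntI l 1 n = cntI l 1 (t-1) + cntI l t n := by
      have := cntI_split l (t := 1) (r := t - 1) (s := n) (by omega) (by omega)
      rw [this]; congr 2; omega
    rw [cntI_one_eq_length hr] at hsplit
    omega
  · rintro ⟨hr, hsc⟩
    refine ⟨hr, fun i hi => ?_⟩
    rw [countP_le_eq_cntI (fun x hx => (hr x hx).1)]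
    have hlen : cntI l 1 n = l.length := cntI_one_eq_length hr
    rcases Nat.eq_or_lt_of_le hi with rfl | hlt
    · omega
    · have hsc' := hsc (i + 1) (by omega) (by omega)
      have hsplit : cntI l 1 n = cntI l 1 i + cntI l (i+1) n := cntI_split l (by omega) (by omega)
      omega

open scoped Classical in
lemma Vset_card {n : ℕ} {l : List ℕ} (hr : InRange n l) (hsc : SCp n l) :
    (Vset n l).card + l.length = n := by
  obtain ⟨o, ho, hnd, hlen, hset⟩ := process n l hr hsc
  have h1 : ((Finset.Icc 1 n).filter (fun s => occF l s)).card = l.length := by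
    rw [← hset, List.card_toFinset, hnd.dedup, hlen]
  have h2 := Finset.card_filter_add_card_filter_not
    (s := Finset.Icc 1 n) (p := fun s => occF l s)
  rw [Vset]
  rw [h1] at h2
  simp only [Nat.card_Icc] at h2
  omega

open scoped Classical in
lemma Vset_eq_sdiff {n : ℕ} {l : List ℕ} :
    Vset n l = (Finset.Icc 1 n) \ ((Finset.Icc 1 n).filter (fun s => occF l s)) := by
  rw [Vset, Finset.filter_not]

open scoped Classical in
lemma kspot_eq_iff {n : ℕ} {l : List ℕ} {i k : ℕ} (hr : InRange n l) (hsc : SCp n l)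
    (hk : 1 ≤ k) :
    kspot n l i = k ↔ k ∈ Vset n l ∧ ((Vset n l).filter (fun v => v < k)).card = i - 1 := by
  obtain ⟨o, ho, hnd, hlen, hset⟩ := process n l hr hsc
  rw [kspot, outcome, ho]
  simp only [Option.getD_some]
  rw [hset, ← Vset_eq_sdiff]
  exact sort_getD_eq_iff _ hk



lemma Vset_mem_self_zero {n : ℕ} {l : List ℕ} {s : ℕ} (h : s ∈ Vset n l) :
    cntI l s s = 0 := by
  rw [mem_Vset] at h
  have := not_occF_iff.1 h.2 s h.1.1 (le_refl s)
  omega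

open scoped Classical in
lemma SCp_cons {n j : ℕ} {l : List ℕ} (hj1 : 1 ≤ j) (hjn : j ≤ n) :
    SCp n (j :: l) ↔ SCp n l ∧ ((Vset n l).filter (fun v => j ≤ v)).Nonempty := by
  constructor
  · intro hsc
    have hscl : SCp n l := by
      intro t h1 h2
      have := hsc t h1 h2
      rw [cntI_cons] at this
      omega
    refine ⟨hscl, ?_⟩
    by_contra hcon
    rw [Finset.not_nonempty_iff_eq_empty, Finset.filter_eq_empty_iff] at hcon
    have hallocc : ∀ x, j ≤ x → x ≤ n → occF l x := by
      intro x hx1 hx2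
      by_contra hno
      exact hcon (mem_Vset.2 ⟨⟨by omega, hx2⟩, hno⟩) hx1
    obtain ⟨t, h1, h2, h3⟩ := chain l n j hj1 hjn hallocc
    have := hsc t h1 (by omega)
    rw [cntI_cons, if_pos ⟨h2, hjn⟩] at this
    omega
  · rintro ⟨hscl, ⟨v, hv⟩⟩
    rw [Finset.mem_filter] at hv
    obtain ⟨hvV, hjv⟩ := hv
    rw [mem_Vset] at hvV
    intro t h1 h2
    rw [cntI_cons]
    by_cases hm : t ≤ j ∧ j ≤ n
    · have hnocc := not_occF_iff.1 hvV.2 t h1 (by omega)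
      rcases Nat.eq_or_lt_of_le hvV.1.2 with rfl | hvn
      · rw [if_pos hm]; omega
      · have hsplit : cntI l t n = cntI l t v + cntI l (v+1) n :=
          cntI_split l (by omega) (by omega)
        have := hscl (v+1) (by omega) (by omega)
        rw [if_pos hm]
        omega
    · rw [if_neg hm]
      have := hscl t h1 h2
      omega

open scoped Classical in
lemma Vset_cons {n j : ℕ} {l : List ℕ} (hj1 : 1 ≤ j) (hjn : j ≤ n)
    (hne : ((Vset n l).filter (fun v => j ≤ v)).Nonempty) :
    Vset n (j :: l) = Vset n l \ {((Vset n l).filter (fun v => j ≤ v)).min' hne} := by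
  set u := ((Vset n l).filter (fun v => j ≤ v)).min' hne with hu
  have humem : u ∈ (Vset n l).filter (fun v => j ≤ v) := Finset.min'_mem _ hne
  rw [Finset.mem_filter] at humem
  obtain ⟨huV, hju⟩ := humem
  have huV' := mem_Vset.1 huV
  have hmin : ∀ x, j ≤ x → x < u → occF l x := by
    intro x hx1 hx2
    by_contra hno
    have hxV : x ∈ (Vset n l).filter (fun v => j ≤ v) :=
      Finset.mem_filter.2 ⟨mem_Vset.2 ⟨⟨by omega, by omega⟩, hno⟩, hx1⟩
    have := Finset.min'_le _ _ hxV
    omega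
  ext s
  rw [Finset.mem_sdiff, mem_Vset, mem_Vset, Finset.mem_singleton]
  constructor
  · rintro ⟨hs, hnocc⟩
    have hiff := occF_cons_iff hj1 hju huV'.2 hmin s hs.1
    refine ⟨⟨hs, fun ho => hnocc (hiff.2 (Or.inl ho))⟩, fun heq => hnocc (hiff.2 (Or.inr heq))⟩
  · rintro ⟨⟨hs, hnocc⟩, hneq⟩
    refine ⟨hs, fun ho => ?_⟩
    rcases (occF_cons_iff hj1 hju huV'.2 hmin s hs.1).1 ho with h | h
    · exact hnocc h
    · exact hneq h

open scoped Classical in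
/-- exact count of preferences below a vacant spot. -/
lemma cnt_prefix {n : ℕ} {l : List ℕ} : ∀ w : ℕ, w ∈ Vset n l →
    cntI l 1 w + ((Vset n l).filter (fun v => v ≤ w)).card = w := by
  intro w
  induction w using Nat.strong_induction_on with
  | _ w ih =>
    intro hw
    have hwV := mem_Vset.1 hw
    have hnocc := not_occF_iff.1 hwV.2
    have hcww : cntI l w w = 0 := Vset_mem_self_zero hw
    set B := (Vset n l).filter (fun v => v < w) with hB
    by_cases hBne : B.Nonempty
    · set w' := B.max' hBne with hw'
      have hw'mem : w' ∈ B := Finset.max'_mem _ hBne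
      rw [hB, Finset.mem_filter] at hw'mem
      obtain ⟨hw'V, hw'w⟩ := hw'mem
      have hw'V' := mem_Vset.1 hw'V
      have hocc_between : ∀ x, w' < x → x < w → occF l x := by
        intro x hx1 hx2
        by_contra hno
        have hxB : x ∈ B := Finset.mem_filter.2
          ⟨mem_Vset.2 ⟨⟨by omega, by omega⟩, hno⟩, hx2⟩
        have := Finset.le_max' _ _ hxB
        omega
      -- count in (w', w) is exactly w - w' - 1
      have hupper : cntI l (w'+1) w + (w'+1) ≤ w := hnocc (w'+1) (by omega) (by omega)
      have hlower : w - w' - 1 ≤ cntI l (w'+1) w := by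
        rcases Nat.eq_or_lt_of_le (show w' + 1 ≤ w by omega) with heq | hlt
        · omega
        · obtain ⟨t, h1, h2, h3⟩ := chain l (w-1) (w'+1) (by omega) (by omega)
            (fun x hx1 hx2 => hocc_between x (by omega) (by omega))
          have hsplit2 : cntI l (w'+1) w = cntI l (w'+1) (w-1) + cntI l w w := by
            have := cntI_split l (t := w'+1) (r := w - 1) (s := w) (by omega) (by omega)
            rw [this]; congr 2; omega
          by_cases htw : t ≤ w'
          · have hsplit : cntI l t (w-1) = cntI l t w' + cntI l (w'+1) (w-1) :=
              cntI_split l (by omega) (by omega)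
            have hbound : cntI l t w' + t ≤ w' := not_occF_iff.1 hw'V'.2 t h1 htw
            omega
          · have ht : t = w' + 1 := by omega
            subst ht
            omega
      have hIH := ih w' (by omega) hw'V
      have hsplitw : cntI l 1 w = cntI l 1 w' + cntI l (w'+1) w :=
        cntI_split l (by omega) (by omega)
      have hcard : ((Vset n l).filter (fun v => v ≤ w)).card
          = ((Vset n l).filter (fun v => v ≤ w')).card + 1 := by
        have : (Vset n l).filter (fun v => v ≤ w)
            = insert w ((Vset n l).filter (fun v => v ≤ w')) := by
          ext s
          simp only [Finset.mem_filter, Finset.mem_insert]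
          constructor
          · rintro ⟨hsV, hsw⟩
            rcases Nat.eq_or_lt_of_le hsw with rfl | hslt
            · exact Or.inl rfl
            · right
              refine ⟨hsV, ?_⟩
              by_contra hcon
              push_neg at hcon
              have : s ∈ B := Finset.mem_filter.2 ⟨hsV, hslt⟩
              have := Finset.le_max' _ _ this
              omega
          · rintro (rfl | ⟨hsV, hsw'⟩)
            · exact ⟨hw, le_refl _⟩
            · exact ⟨hsV, by omega⟩
        rw [this, Finset.card_insert_of_notMem]
        intro hcon
        rw [Finset.mem_filter] at hcon
        omega
      rw [hcard, hsplitw]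
      omega
    · -- no vacancy below w
      rw [Finset.not_nonempty_iff_eq_empty, hB, Finset.filter_eq_empty_iff] at hBne
      have hocc_below : ∀ x, 1 ≤ x → x < w → occF l x := by
        intro x hx1 hx2
        by_contra hno
        exact hBne (mem_Vset.2 ⟨⟨hx1, by omega⟩, hno⟩) hx2
      have hcnt : cntI l 1 w = w - 1 := by
        rcases Nat.eq_or_lt_of_le hwV.1.1 with h1 | h1
        · have : cntI l 1 w = cntI l w w := by rw [← h1]
          omega
        · obtain ⟨t, ht1, ht2, ht3⟩ := chain l (w-1) 1 (le_refl 1) (by omega)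
            (fun x hx1 hx2 => hocc_below x hx1 (by omega))
          have ht : t = 1 := by omega
          subst ht
          have hsplit : cntI l 1 w = cntI l 1 (w-1) + cntI l w w := by
            have := cntI_split l (t := 1) (r := w - 1) (s := w) (by omega) (by omega)
            rw [this]; congr 2; omega
          have hup : cntI l 1 w + 1 ≤ w := hnocc 1 (le_refl 1) (by omega)
          omega
      have hcard : (Vset n l).filter (fun v => v ≤ w) = {w} := by
        ext s
        simp only [Finset.mem_filter, Finset.mem_singleton]
        constructor
        · rintro ⟨hsV, hsw⟩
          rcases Nat.eq_or_lt_of_le hsw with rfl | hslt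
          · rfl
          · exact absurd hslt (by intro h; exact hBne hsV h)
        · rintro rfl
          exact ⟨hw, le_refl _⟩
      rw [hcard, hcnt]
      simp
      omega


lemma inRange_cons {n j : ℕ} {R : List ℕ} :
    InRange n (j :: R) ↔ (1 ≤ j ∧ j ≤ n) ∧ InRange n R := by
  unfold InRange
  rw [List.forall_mem_cons]

lemma filter_sdiff_of_not {V : Finset ℕ} {u : ℕ} {p : ℕ → Prop} [DecidablePred p]
    (hu : ¬ p u) : (V \ {u}).filter p = V.filter p := by
  ext v
  simp only [Finset.mem_filter, Finset.mem_sdiff, Finset.mem_singleton]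
  constructor
  · rintro ⟨⟨h1, _⟩, h2⟩; exact ⟨h1, h2⟩
  · rintro ⟨h1, h2⟩
    exact ⟨⟨h1, fun heq => hu (heq ▸ h2)⟩, h2⟩

lemma card_filter_sdiff_of_mem {V : Finset ℕ} {u : ℕ} {p : ℕ → Prop} [DecidablePred p]
    (hu : u ∈ V) (hp : p u) : ((V \ {u}).filter p).card + 1 = (V.filter p).card := by
  have h : (V \ {u}).filter p = (V.filter p).erase u := by
    ext v
    simp only [Finset.mem_filter, Finset.mem_sdiff, Finset.mem_singleton, Finset.mem_erase]
    tauto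
  rw [h, Finset.card_erase_of_mem (Finset.mem_filter.2 ⟨hu, hp⟩)]
  have : 1 ≤ (V.filter p).card := Finset.card_pos.2 ⟨u, Finset.mem_filter.2 ⟨hu, hp⟩⟩
  omega

open scoped Classical in
lemma Aprop_iff {m n i k : ℕ} {R : List ℕ} (hrest : InRange n R) (hlen : R.length + 1 = m)
    {j : ℕ} (hj1 : 1 ≤ j) (hjn : j ≤ n) (hk1 : 1 ≤ k) :
    (IsPF n (j :: R) ∧ (j :: R).length = m ∧ kspot n (j :: R) i = k) ↔
    (SCp n R ∧ ∃ hne : ((Vset n R).filter (fun v => j ≤ v)).Nonempty,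
      k ∈ Vset n R ∧ ((Vset n R).filter (fun v => j ≤ v)).min' hne ≠ k ∧
      (((Vset n R \ {((Vset n R).filter (fun v => j ≤ v)).min' hne}).filter
        (fun v => v < k)).card = i - 1)) := by
  constructor
  · rintro ⟨hpf, hml, hks⟩
    obtain ⟨hr, hsc⟩ := isPF_iff.1 hpf
    obtain ⟨hscR, hne⟩ := (SCp_cons hj1 hjn).1 hsc
    refine ⟨hscR, hne, ?_⟩
    have hVJ := Vset_cons hj1 hjn hne
    have hkk := (kspot_eq_iff hr hsc hk1).1 hks
    rw [hVJ] at hkk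
    obtain ⟨hkmem, hcard⟩ := hkk
    rw [Finset.mem_sdiff, Finset.mem_singleton] at hkmem
    exact ⟨hkmem.1, fun h => hkmem.2 h.symm, hcard⟩
  · rintro ⟨hscR, hne, hkV, hune, hcard⟩
    have hr : InRange n (j :: R) := inRange_cons.2 ⟨⟨hj1, hjn⟩, hrest⟩
    have hsc : SCp n (j :: R) := (SCp_cons hj1 hjn).2 ⟨hscR, hne⟩
    refine ⟨isPF_iff.2 ⟨hr, hsc⟩, by simpa using hlen, ?_⟩
    rw [kspot_eq_iff hr hsc hk1, Vset_cons hj1 hjn hne]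
    refine ⟨?_, hcard⟩
    rw [Finset.mem_sdiff, Finset.mem_singleton]
    exact ⟨hkV, fun h => hune h.symm⟩


open scoped Classical in
/-- Level-2 reduction: the theorem's LHS in terms of the vacancy set of `rest`. -/
lemma LHS_iff_V {m n i k : ℕ} {R : List ℕ} (hrest : InRange n R) (hlen : R.length + 1 = m)
    (hi1 : 1 ≤ i) (hk1 : i ≤ k) {j : ℕ} (hj1 : 1 ≤ j) (hjn : j ≤ n) (hkn : k ≤ n) :
    ((IsPF n (j :: R) ∧ (j :: R).length = m ∧ kspot n (j :: R) i = k) ∧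
      ¬(IsPF n ((j+1) :: R) ∧ ((j+1) :: R).length = m ∧ kspot n ((j+1) :: R) i = k)) ↔
    (SCp n R ∧ j ∈ Vset n R ∧ k ∈ Vset n R ∧
      ((j < k ∧ (∀ v ∈ Vset n R, ¬(j < v ∧ v < k)) ∧
          ((Vset n R).filter (fun v => v < j)).card = i - 1) ∨
       (k < j ∧ (∀ v ∈ Vset n R, ¬ j < v) ∧
          ((Vset n R).filter (fun v => v < k)).card = i - 1))) := by
  have hk1' : 1 ≤ k := by omega
  set V := Vset n R with hV
  constructor
  · rintro ⟨hA, hnA⟩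
    obtain ⟨hscR, hne, hkV, hune, hcard⟩ := (Aprop_iff hrest hlen hj1 hjn hk1').1 hA
    set u := (V.filter (fun v => j ≤ v)).min' hne with hu
    have humem : u ∈ V.filter (fun v => j ≤ v) := Finset.min'_mem _ hne
    rw [Finset.mem_filter] at humem
    obtain ⟨huV, hju⟩ := humem
    refine ⟨hscR, ?_⟩
    rcases lt_trichotomy j k with hjk | hjk | hjk
    · -- case j < k
      have huk : u ≤ k := Finset.min'_le _ _ (Finset.mem_filter.2 ⟨hkV, by omega⟩)
      have hultk : u < k := by omega
      have hcardk : (V.filter (fun v => v < k)).card = i := by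
        have := card_filter_sdiff_of_mem (p := fun v => v < k) huV hultk
        rw [← hV] at hcard
        omega
      have hnov : ∀ v ∈ V, ¬(j < v ∧ v < k) := by
        rintro v hvV ⟨hv1, hv2⟩
        apply hnA
        rw [Aprop_iff hrest hlen (by omega) (by omega) hk1']
        rw [← hV]
        have hne' : (V.filter (fun w => j + 1 ≤ w)).Nonempty :=
          ⟨v, Finset.mem_filter.2 ⟨hvV, by omega⟩⟩
        refine ⟨hscR, hne', ?_⟩
        set u' := (V.filter (fun w => j + 1 ≤ w)).min' hne' with hu'
        have hu'le : u' ≤ v := Finset.min'_le _ _ (Finset.mem_filter.2 ⟨hvV, by omega⟩)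
        have hu'mem : u' ∈ V.filter (fun w => j + 1 ≤ w) := Finset.min'_mem _ hne'
        rw [Finset.mem_filter] at hu'mem
        have hu'k : u' < k := by omega
        refine ⟨hkV, by omega, ?_⟩
        have := card_filter_sdiff_of_mem (p := fun v => v < k) hu'mem.1 hu'k
        omega
      have huj : u = j := by
        by_contra hcon
        exact hnov u huV ⟨by omega, hultk⟩
      have hjV : j ∈ V := huj ▸ huV
      have hfk : V.filter (fun v => v < k) = insert j (V.filter (fun v => v < j)) := by
        ext v
        simp only [Finset.mem_filter, Finset.mem_insert]
        constructor
        · rintro ⟨hvV, hvk⟩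
          rcases lt_trichotomy v j with h | h | h
          · exact Or.inr ⟨hvV, h⟩
          · exact Or.inl h
          · exact absurd ⟨h, hvk⟩ (hnov v hvV)
        · rintro (rfl | ⟨hvV, hvj⟩)
          · exact ⟨hjV, hjk⟩
          · exact ⟨hvV, by omega⟩
      have hjnotmem : j ∉ V.filter (fun v => v < j) := by
        simp only [Finset.mem_filter]
        omega
      have := Finset.card_insert_of_notMem hjnotmem
      rw [hfk, this] at hcardk
      exact ⟨hjV, hkV, Or.inl ⟨hjk, hnov, by omega⟩⟩
    · -- case j = k : contradiction
      exfalso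
      have huk : u ≤ k := Finset.min'_le _ _ (Finset.mem_filter.2 ⟨hkV, by omega⟩)
      exact hune (le_antisymm huk (hjk ▸ hju))
    · -- case k < j
      have hnov : ∀ v ∈ V, ¬ j < v := by
        intro v hvV hjv
        apply hnA
        have hvn : v ≤ n := ((mem_Vset.1 hvV).1).2
        rw [Aprop_iff hrest hlen (by omega) (by omega) hk1']
        rw [← hV]
        have hne' : (V.filter (fun w => j + 1 ≤ w)).Nonempty :=
          ⟨v, Finset.mem_filter.2 ⟨hvV, by omega⟩⟩
        refine ⟨hscR, hne', ?_⟩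
        set u' := (V.filter (fun w => j + 1 ≤ w)).min' hne' with hu'
        have hu'mem : u' ∈ V.filter (fun w => j + 1 ≤ w) := Finset.min'_mem _ hne'
        rw [Finset.mem_filter] at hu'mem
        refine ⟨hkV, by omega, ?_⟩
        rw [filter_sdiff_of_not (by omega)]
        rw [← hV, filter_sdiff_of_not (u := u) (by omega)] at hcard
        exact hcard
      have huj : u = j := by
        have := hnov u huV
        omega
      have hjV : j ∈ V := huj ▸ huV
      rw [← hV, filter_sdiff_of_not (u := u) (by omega)] at hcard
      exact ⟨hjV, hkV, Or.inr ⟨hjk, hnov, hcard⟩⟩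
  · rintro ⟨hscR, hjV, hkV, hcase⟩
    have hAj : IsPF n (j :: R) ∧ (j :: R).length = m ∧ kspot n (j :: R) i = k := by
      rw [Aprop_iff hrest hlen hj1 hjn hk1']
      rw [← hV]
      have hne : (V.filter (fun v => j ≤ v)).Nonempty :=
        ⟨j, Finset.mem_filter.2 ⟨hjV, le_refl j⟩⟩
      refine ⟨hscR, hne, hkV, ?_⟩
      set u := (V.filter (fun v => j ≤ v)).min' hne with hu
      have humem : u ∈ V.filter (fun v => j ≤ v) := Finset.min'_mem _ hne
      rw [Finset.mem_filter] at humem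
      have huj : u = j := by
        have hlej : u ≤ j := Finset.min'_le _ _ (Finset.mem_filter.2 ⟨hjV, le_refl j⟩)
        omega
      rcases hcase with ⟨hjk, hnov, hcard⟩ | ⟨hjk, hnov, hcard⟩
      · refine ⟨by omega, ?_⟩
        rw [huj]
        have hfk : V.filter (fun v => v < k) = insert j (V.filter (fun v => v < j)) := by
          ext v
          simp only [Finset.mem_filter, Finset.mem_insert]
          constructor
          · rintro ⟨hvV, hvk⟩
            rcases lt_trichotomy v j with h | h | h
            · exact Or.inr ⟨hvV, h⟩
            · exact Or.inl h
            · exact absurd ⟨h, hvk⟩ (hnov v hvV)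
          · rintro (rfl | ⟨hvV, hvj⟩)
            · exact ⟨hjV, hjk⟩
            · exact ⟨hvV, by omega⟩
        have hjnotmem : j ∉ V.filter (fun v => v < j) := by
          simp only [Finset.mem_filter]
          omega
        have hcc := card_filter_sdiff_of_mem (p := fun v => v < k) hjV hjk
        rw [hfk, Finset.card_insert_of_notMem hjnotmem] at hcc
        have hjfil : (V \ {j}).filter (fun v => v < k) = (V.filter (fun v => v < k)) \ {j} := by
          ext v
          simp only [Finset.mem_filter, Finset.mem_sdiff, Finset.mem_singleton]
          tauto
        rw [hfk] at hjfil
        -- card of ((insert j S) \ {j}) where j ∉ S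
        have : (V \ {j}).filter (fun v => v < k) = V.filter (fun v => v < j) := by
          rw [hjfil]
          ext v
          simp only [Finset.mem_sdiff, Finset.mem_insert, Finset.mem_singleton, Finset.mem_filter]
          constructor
          · rintro ⟨h1 | h1, h2⟩
            · omega
            · exact h1
          · rintro ⟨h1, h2⟩
            exact ⟨Or.inr ⟨h1, h2⟩, by omega⟩
        rw [this, hcard]
      · refine ⟨by omega, ?_⟩
        rw [huj, filter_sdiff_of_not (by omega)]
        exact hcard
    refine ⟨hAj, ?_⟩
    rintro hAj1
    have hj1n : j + 1 ≤ n := by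
      have := (isPF_iff.1 hAj1.1).1
      exact (inRange_cons.1 this).1.2
    obtain ⟨-, hne', hkV', hune', hcard'⟩ :=
      (Aprop_iff hrest hlen (by omega) hj1n hk1').1 hAj1
    obtain ⟨v, hv⟩ := hne'
    rw [Finset.mem_filter] at hv
    rcases hcase with ⟨hjk, hnov, hcard⟩ | ⟨hjk, hnov, hcard⟩
    · -- j < k : A(j+1) forces a vacancy in (j,k) or kspot ≠ k
      set u' := (V.filter (fun w => j + 1 ≤ w)).min' ⟨v, Finset.mem_filter.2 hv⟩ with hu'
      have hu'mem : u' ∈ V.filter (fun w => j + 1 ≤ w) :=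
        Finset.min'_mem _ ⟨v, Finset.mem_filter.2 hv⟩
      rw [Finset.mem_filter] at hu'mem
      have hu'k : u' ≤ k := Finset.min'_le _ _ (Finset.mem_filter.2 ⟨hkV, by omega⟩)
      have hune'' : u' ≠ k := hune'
      exact hnov u' hu'mem.1 ⟨by omega, by omega⟩
    · -- k < j : no vacancy above j at all
      exact hnov v hv.1 (by omega)


lemma cntI_shrink {δ : List ℕ} {c : ℕ} (hb : ∀ x ∈ δ, x ≤ c) {t s : ℕ} (hcs : c ≤ s) :
    cntI δ t s = cntI δ t c := by
  apply List.countP_congr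
  intro x hx
  have := hb x hx
  simp only [decide_eq_true_eq]
  omega

lemma cnt_tail_le {N : ℕ} {δ : List ℕ} (hpf : IsPF N δ) {t : ℕ} (ht : 1 ≤ t)
    (ht2 : t ≤ N + 1) : cntI δ t N + t ≤ N + 1 := by
  obtain ⟨hr, hsc⟩ := isPF_iff.1 hpf
  by_cases htN : t ≤ N
  · exact hsc t ht htN
  · have : cntI δ t N = 0 := cntI_eq_zero (fun x hx => by have := hr x hx; omega)
    omega

lemma isPF_full_lower {N : ℕ} {δ : List ℕ} (hpf : IsPF N δ) (hlen : δ.length = N) {s : ℕ}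
    (hs : s ≤ N) : s ≤ cntI δ 1 s := by
  have h := hpf.2 s hs
  rw [countP_le_eq_cntI (fun x hx => (hpf.1 x hx).1)] at h
  omega

lemma cntI_map_shift {δ : List ℕ} (c : ℕ) {t : ℕ} (s : ℕ) (hδ : ∀ b ∈ δ, 1 ≤ b)
    (ht : c + 1 ≤ t) :
    cntI (δ.map (fun x => x + c)) t s = cntI δ (t - c) (s - c) := by
  unfold cntI
  rw [List.countP_map]
  apply List.countP_congr
  intro b hb
  have := hδ b hb
  simp only [Function.comp_apply, decide_eq_true_eq]
  omega

lemma cntI_map_shift_low {δ : List ℕ} (c : ℕ) {t : ℕ} (s : ℕ) (hδ : ∀ b ∈ δ, 1 ≤ b)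
    (ht : t ≤ c + 1) :
    cntI (δ.map (fun x => x + c)) t s = cntI δ 1 (s - c) := by
  unfold cntI
  rw [List.countP_map]
  apply List.countP_congr
  intro b hb
  have := hδ b hb
  simp only [Function.comp_apply, decide_eq_true_eq]
  omega

lemma cntI_decomp {R A B C : List ℕ} (hperm : R.Perm (A ++ B ++ C)) (t s : ℕ) :
    cntI R t s = cntI A t s + cntI B t s + cntI C t s := by
  rw [cntI_perm hperm, cntI_append, cntI_append]

open scoped Classical in
lemma Vset_below {R α : List ℕ} {n c : ℕ} (hcn : c ≤ n)
    (hagree : ∀ t s, 1 ≤ t → t ≤ s → s ≤ c → cntI R t s = cntI α t s) :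
    (Vset n R).filter (fun v => v ≤ c) = Vset c α := by
  ext v
  rw [Finset.mem_filter, mem_Vset, mem_Vset]
  constructor
  · rintro ⟨⟨⟨h1, h2⟩, hnocc⟩, hvc⟩
    refine ⟨⟨h1, hvc⟩, fun hocc => hnocc ?_⟩
    obtain ⟨t, ht1, ht2, ht3⟩ := hocc
    exact ⟨t, ht1, ht2, by rw [hagree t v ht1 ht2 hvc]; omega⟩
  · rintro ⟨⟨h1, h2⟩, hnocc⟩
    refine ⟨⟨⟨h1, by omega⟩, fun hocc => hnocc ?_⟩, h2⟩
    obtain ⟨t, ht1, ht2, ht3⟩ := hocc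
    exact ⟨t, ht1, ht2, by rw [← hagree t v ht1 ht2 h2]; omega⟩

lemma card_filter_le_of_mem {V : Finset ℕ} {j : ℕ} (hj : j ∈ V) :
    (V.filter (fun v => v ≤ j)).card = (V.filter (fun v => v < j)).card + 1 := by
  have h : V.filter (fun v => v ≤ j) = insert j (V.filter (fun v => v < j)) := by
    ext v
    simp only [Finset.mem_filter, Finset.mem_insert]
    constructor
    · rintro ⟨hv, hvj⟩
      rcases Nat.eq_or_lt_of_le hvj with rfl | h
      · exact Or.inl rfl
      · exact Or.inr ⟨hv, h⟩
    · rintro (rfl | ⟨hv, hvj⟩)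
      · exact ⟨hj, le_refl _⟩
      · exact ⟨hv, by omega⟩
  rw [h, Finset.card_insert_of_notMem (by simp only [Finset.mem_filter]; omega)]

lemma no_elem_of_vac {n : ℕ} {R : List ℕ} {w : ℕ} (hw : w ∈ Vset n R) :
    ∀ x ∈ R, x ≠ w := by
  intro x hx heq
  subst heq
  have h0 := Vset_mem_self_zero hw
  rw [cntI, List.countP_eq_zero] at h0
  have := h0 x hx
  simp at this

open scoped Classical in
lemma case1_iff {m n i k j : ℕ} {R : List ℕ} (hrest : InRange n R) (hlen : R.length + 1 = m)
    (hmn : m < n) (hi1 : 1 ≤ i) (hi2 : i ≤ n - m) (hk2 : k ≤ m + i)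
    (hj1 : 1 ≤ j) (hjk : j < k) (hkn : k ≤ n) :
    (SCp n R ∧ j ∈ Vset n R ∧ k ∈ Vset n R ∧ (∀ v ∈ Vset n R, ¬(j < v ∧ v < k)) ∧
      ((Vset n R).filter (fun v => v < j)).card = i - 1) ↔
    (i ≤ j ∧ j + 1 ≤ k ∧ ∃ α β γ : List ℕ,
      (IsPF (j - 1) α ∧ α.length = j - i) ∧
      (IsPF (k - j - 1) β ∧ β.length = k - j - 1) ∧
      (IsPF (n - k) γ ∧ γ.length = m + i - k) ∧
      R.Perm (α ++ β.map (fun x => x + j) ++ γ.map (fun x => x + k))) := by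
  have hmi : m + i ≤ n := by omega
  constructor
  · rintro ⟨hsc, hjV, hkV, hnov, hcard⟩
    have hjn : j ≤ n := by omega
    have hnoj : ∀ x ∈ R, x ≠ j := no_elem_of_vac hjV
    have hnok : ∀ x ∈ R, x ≠ k := no_elem_of_vac hkV
    have hjvac := not_occF_iff.1 (mem_Vset.1 hjV).2
    have hkvac := not_occF_iff.1 (mem_Vset.1 hkV).2
    have hR1 : ∀ x ∈ R, 1 ≤ x := fun x hx => (hrest x hx).1
    -- cardinalities
    have hcardlej : ((Vset n R).filter (fun v => v ≤ j)).card = i := by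
      rw [card_filter_le_of_mem hjV]; omega
    have hfilk : (Vset n R).filter (fun v => v ≤ k)
        = insert k ((Vset n R).filter (fun v => v ≤ j)) := by
      ext v
      simp only [Finset.mem_filter, Finset.mem_insert]
      constructor
      · rintro ⟨hv, hvk⟩
        rcases Nat.eq_or_lt_of_le hvk with rfl | h
        · exact Or.inl rfl
        · right
          refine ⟨hv, ?_⟩
          by_contra hcon
          exact hnov v hv ⟨by omega, h⟩
      · rintro (rfl | ⟨hv, hvj⟩)
        · exact ⟨hkV, le_refl _⟩
        · exact ⟨hv, by omega⟩
    have hcardlek : ((Vset n R).filter (fun v => v ≤ k)).card = i + 1 := by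
      rw [hfilk, Finset.card_insert_of_notMem (by simp only [Finset.mem_filter]; omega),
        hcardlej]
    have hpj := cnt_prefix j hjV
    have hpk := cnt_prefix k hkV
    rw [hcardlej] at hpj
    rw [hcardlek] at hpk
    have hij : i ≤ j := by
      have hsub : (Vset n R).filter (fun v => v ≤ j) ⊆ Finset.Icc 1 j := by
        intro v hv
        rw [Finset.mem_filter, mem_Vset] at hv
        rw [Finset.mem_Icc]
        omega
      have := Finset.card_le_card hsub
      rw [hcardlej, Nat.card_Icc] at this
      omega
    -- the three blocks
    set A := R.filter (fun x => decide (x < j)) with hA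
    set B := R.filter (fun x => decide (j < x ∧ x < k)) with hB
    set C := R.filter (fun x => decide (k < x)) with hC
    have hAlen : A.length = cntI R 1 j := by
      rw [hA, ← List.countP_eq_length_filter]
      apply List.countP_congr
      intro x hx
      have h1 := hR1 x hx
      have h2 := hnoj x hx
      simp only [decide_eq_true_eq]
      omega
    have hBlen : B.length = cntI R (j+1) k := by
      rw [hB, ← List.countP_eq_length_filter]
      apply List.countP_congr
      intro x hx
      have h2 := hnok x hx
      simp only [decide_eq_true_eq]
      omega
    have hClen : C.length = cntI R (k+1) n := by
      rw [hC, ← List.countP_eq_length_filter]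
      apply List.countP_congr
      intro x hx
      have h1 := (hrest x hx).2
      simp only [decide_eq_true_eq]
      omega
    have hsplit1 : cntI R 1 k = cntI R 1 j + cntI R (j+1) k := cntI_split R (by omega) (by omega)
    have hsplit2 : cntI R 1 n = cntI R 1 k + cntI R (k+1) n := cntI_split R (by omega) (by omega)
    have htot : cntI R 1 n = R.length := cntI_one_eq_length hrest
    -- component membership
    have hAmem : ∀ x ∈ A, x ∈ R ∧ x < j := by
      intro x hx
      rw [hA, List.mem_filter] at hx
      exact ⟨hx.1, of_decide_eq_true hx.2⟩
    have hBmem : ∀ x ∈ B, x ∈ R ∧ j < x ∧ x < k := by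
      intro x hx
      rw [hB, List.mem_filter] at hx
      exact ⟨hx.1, of_decide_eq_true hx.2⟩
    have hCmem : ∀ x ∈ C, x ∈ R ∧ k < x := by
      intro x hx
      rw [hC, List.mem_filter] at hx
      exact ⟨hx.1, of_decide_eq_true hx.2⟩
    refine ⟨hij, by omega, A, B.map (fun x => x - j), C.map (fun x => x - k), ⟨?_, ?_⟩,
      ⟨?_, ?_⟩, ⟨?_, ?_⟩, ?_⟩
    · -- IsPF (j-1) A
      constructor
      · intro x hx
        obtain ⟨hxR, hxj⟩ := hAmem x hx
        have := hrest x hxR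
        omega
      · intro i' hi'
        rw [countP_le_eq_cntI (fun x hx => (hrest x (hAmem x hx).1).1)]
        have hAi' : cntI A 1 i' = cntI R 1 i' := by
          rw [hA, cntI, cntI, List.countP_filter]
          apply List.countP_congr
          intro x hx
          simp only [Bool.and_eq_true, decide_eq_true_eq]
          omega
        have hsp : cntI R 1 j = cntI R 1 i' + cntI R (i'+1) j := cntI_split R (by omega) (by omega)
        have hv := hjvac (i'+1) (by omega) (by omega)
        rw [hAi']
        omega
    · omega
    · -- IsPF (k-j-1) β
      constructor
      · intro b hb
        rw [List.mem_map] at hb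
        obtain ⟨x, hx, rfl⟩ := hb
        have := hBmem x hx
        omega
      · intro s hs
        have hcount : (B.map (fun x => x - j)).countP (fun x => decide (x ≤ s))
            = cntI R (j+1) (s+j) := by
          rw [List.countP_map, hB, cntI, List.countP_filter]
          apply List.countP_congr
          intro x hx
          simp only [Function.comp_apply, Bool.and_eq_true, decide_eq_true_eq]
          omega
        rw [hcount]
        have hlm : (B.map (fun x => x - j)).length = B.length := List.length_map _
        have hsp1 : cntI R 1 (s+j) = cntI R 1 j + cntI R (j+1) (s+j) :=
          cntI_split R (by omega) (by omega)
        have hsp2 : cntI R 1 k = cntI R 1 (s+j) + cntI R (s+j+1) k :=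
          cntI_split R (by omega) (by omega)
        have hv := hkvac (s+j+1) (by omega) (by omega)
        omega
    · rw [List.length_map]; omega
    · -- IsPF (n-k) γ
      constructor
      · intro c hc
        rw [List.mem_map] at hc
        obtain ⟨x, hx, rfl⟩ := hc
        have h1 := hCmem x hx
        have h2 := hrest x h1.1
        omega
      · intro s hs
        have hCrange : ∀ x ∈ C, k + 1 ≤ x ∧ x ≤ n := by
          intro x hx
          have h1 := hCmem x hx
          have h2 := hrest x h1.1
          omega
        have hsplitC : cntI C 1 n = cntI C 1 (s+k) + cntI C (s+k+1) n :=
          cntI_split C (by omega) (by omega)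
        have hClenfull : cntI C 1 n = C.length := by
          unfold cntI
          apply List.countP_eq_length.2
          intro x hx
          have := hCrange x hx
          simp only [decide_eq_true_eq]
          omega
        have htail : cntI C (s+k+1) n = cntI R (k+s+1) n := by
          rw [hC, cntI, cntI, List.countP_filter]
          apply List.countP_congr
          intro x hx
          simp only [Bool.and_eq_true, decide_eq_true_eq]
          omega
        have hcount : (C.map (fun x => x - k)).countP (fun x => decide (x ≤ s))
            = cntI C 1 (s+k) := by
          rw [List.countP_map]
          unfold cntI
          apply List.countP_congr
          intro x hx
          have := hCrange x hx
          simp only [Function.comp_apply, decide_eq_true_eq]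
          omega
        rw [hcount, List.length_map]
        have hbound : cntI R (k+s+1) n ≤ n - k - s := by
          by_cases hcase : k + s + 1 ≤ n
          · have := hsc (k+s+1) (by omega) hcase
            omega
          · have : cntI R (k+s+1) n = 0 :=
              cntI_eq_zero (fun x hx => by have := (hrest x hx).2; omega)
            omega
        omega
    · rw [List.length_map]; omega
    · -- the shuffle permutation
      have hp1 := List.filter_append_perm (fun x => decide (x < j)) R
      set D := R.filter (fun x => !decide (x < j)) with hD
      have hp2 := List.filter_append_perm (fun x => decide (j < x ∧ x < k)) D
      have hDq : D.filter (fun x => decide (j < x ∧ x < k)) = B := by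
        rw [hD, List.filter_filter, hB]
        apply List.filter_congr
        intro x hx
        by_cases h : j < x ∧ x < k
        · have hxj : ¬ x < j := by omega
          simp [h, hxj]
        · simp [h]
      have hDnq : D.filter (fun x => !decide (j < x ∧ x < k)) = C := by
        rw [hD, List.filter_filter, hC]
        apply List.filter_congr
        intro x hx
        have h1 := hnoj x hx
        have h2 := hnok x hx
        by_cases h : k < x
        · have e1 : ¬ (j < x ∧ x < k) := by omega
          have e2 : ¬ x < j := by omega
          simp [h, e1, e2]
        · rcases (show x < j ∨ (j < x ∧ x < k) by omega) with hc | hc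
          · simp [hc, h]
          · simp [hc, h]
      have hmapB : (B.map (fun x => x - j)).map (fun x => x + j) = B := by
        rw [List.map_map]
        have : ∀ x ∈ B, ((fun x => x + j) ∘ (fun x => x - j)) x = id x := by
          intro x hx
          have := hBmem x hx
          simp only [Function.comp_apply, id_eq]
          omega
        rw [List.map_congr_left this, List.map_id]
      have hmapC : (C.map (fun x => x - k)).map (fun x => x + k) = C := by
        rw [List.map_map]
        have : ∀ x ∈ C, ((fun x => x + k) ∘ (fun x => x - k)) x = id x := by
          intro x hx
          have := hCmem x hx
          simp only [Function.comp_apply, id_eq]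
          omega
        rw [List.map_congr_left this, List.map_id]
      rw [hmapB, hmapC]
      have hstep : D.Perm (B ++ C) := by
        rw [← hDq, ← hDnq]
        exact hp2.symm
      have hfinal : R.Perm (A ++ (B ++ C)) :=
        hp1.symm.trans (List.Perm.append_left A hstep)
      rw [List.append_assoc]
      exact hfinal
  · rintro ⟨hij, hjk1, α, β, γ, ⟨hαpf, hαlen⟩, ⟨hβpf, hβlen⟩, ⟨hγpf, hγlen⟩, hperm⟩
    have hjn : j ≤ n := by omega
    have hdec := cntI_decomp hperm
    have hα1 : ∀ x ∈ α, 1 ≤ x ∧ x ≤ j - 1 := hαpf.1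
    have hβ1 : ∀ x ∈ β, 1 ≤ x ∧ x ≤ k - j - 1 := hβpf.1
    have hγ1 : ∀ x ∈ γ, 1 ≤ x ∧ x ≤ n - k := hγpf.1
    have hBmem : ∀ y ∈ β.map (fun x => x + j), j + 1 ≤ y ∧ y ≤ k - 1 := by
      intro y hy
      rw [List.mem_map] at hy
      obtain ⟨b, hb, rfl⟩ := hy
      have := hβ1 b hb
      omega
    have hCmem : ∀ y ∈ γ.map (fun x => x + k), k + 1 ≤ y ∧ y ≤ n := by
      intro y hy
      rw [List.mem_map] at hy
      obtain ⟨c, hc, rfl⟩ := hy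
      have := hγ1 c hc
      omega
    have hαzero : ∀ t s : ℕ, j ≤ t → cntI α t s = 0 := fun t s ht =>
      cntI_eq_zero (fun x hx => by have := hα1 x hx; omega)
    have hBzero : ∀ t s : ℕ, s ≤ j → cntI (β.map (fun x => x + j)) t s = 0 := fun t s hs =>
      cntI_eq_zero (fun x hx => by have := hBmem x hx; omega)
    have hBzero' : ∀ t s : ℕ, k ≤ t → cntI (β.map (fun x => x + j)) t s = 0 := fun t s ht =>
      cntI_eq_zero (fun x hx => by have := hBmem x hx; omega)
    have hCzero : ∀ t s : ℕ, s ≤ k → cntI (γ.map (fun x => x + k)) t s = 0 := fun t s hs =>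
      cntI_eq_zero (fun x hx => by have := hCmem x hx; omega)
    have hαbound : ∀ t : ℕ, 1 ≤ t → ∀ s : ℕ, j - 1 ≤ s → cntI α t s + t ≤ j ∨ j ≤ t := by
      intro t ht s hsj
      by_cases htj : j ≤ t
      · exact Or.inr htj
      · left
        rw [cntI_shrink (fun x hx => (hα1 x hx).2) hsj]
        have := cnt_tail_le hαpf ht (by omega)
        omega
    have hRlen : R.length = α.length + β.length + γ.length := by
      rw [hperm.length_eq]
      simp [List.length_append]
      omega
    -- SCp n R
    have hsc : SCp n R := by
      intro t ht1 htn
      rw [hdec]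
      by_cases hc1 : t ≤ j
      · rcases hαbound t ht1 n (by omega) with h | h
        · have hb : cntI (β.map (fun x => x + j)) t n ≤ k - j - 1 := by
            have := cntI_le_length (β.map (fun x => x + j)) t n
            rw [List.length_map] at this
            omega
          have hc : cntI (γ.map (fun x => x + k)) t n ≤ m + i - k := by
            have := cntI_le_length (γ.map (fun x => x + k)) t n
            rw [List.length_map] at this
            omega
          omega
        · have ha := hαzero t n h
          have hb : cntI (β.map (fun x => x + j)) t n ≤ k - j - 1 := by
            have := cntI_le_length (β.map (fun x => x + j)) t n
            rw [List.length_map] at this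
            omega
          have hc : cntI (γ.map (fun x => x + k)) t n ≤ m + i - k := by
            have := cntI_le_length (γ.map (fun x => x + k)) t n
            rw [List.length_map] at this
            omega
          omega
      · push_neg at hc1
        have ha : cntI α t n = 0 := hαzero t n (by omega)
        by_cases hc2 : t ≤ k
        · have hb : cntI (β.map (fun x => x + j)) t n + (t - j) ≤ k - j := by
            rw [cntI_map_shift j n (fun b hb => (hβ1 b hb).1) (by omega)]
            rw [cntI_shrink (fun x hx => (hβ1 x hx).2) (by omega)]
            have := cnt_tail_le hβpf (t := t - j) (by omega) (by omega)
            omega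
          have hc : cntI (γ.map (fun x => x + k)) t n ≤ m + i - k := by
            have := cntI_le_length (γ.map (fun x => x + k)) t n
            rw [List.length_map] at this
            omega
          omega
        · push_neg at hc2
          have hb : cntI (β.map (fun x => x + j)) t n = 0 := hBzero' t n (by omega)
          have hc : cntI (γ.map (fun x => x + k)) t n + (t - k) ≤ n - k + 1 := by
            rw [cntI_map_shift k n (fun c hc => (hγ1 c hc).1) (by omega)]
            have := cnt_tail_le hγpf (t := t - k) (by omega) (by omega)
            omega
          omega
    have hjV : j ∈ Vset n R := by
      rw [mem_Vset]
      refine ⟨⟨hj1, hjn⟩, not_occF_iff.2 (fun t ht1 htj => ?_)⟩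
      rw [hdec]
      have hb := hBzero t j (le_refl j)
      have hc := hCzero t j (by omega)
      rcases hαbound t ht1 j (by omega) with h | h
      · omega
      · have ha := hαzero t j h
        omega
    have hkV : k ∈ Vset n R := by
      rw [mem_Vset]
      refine ⟨⟨by omega, hkn⟩, not_occF_iff.2 (fun t ht1 htk => ?_)⟩
      rw [hdec]
      have hc := hCzero t k (le_refl k)
      by_cases hc1 : t ≤ j
      · have hb : cntI (β.map (fun x => x + j)) t k ≤ k - j - 1 := by
          have := cntI_le_length (β.map (fun x => x + j)) t k
          rw [List.length_map] at this
          omega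
        rcases hαbound t ht1 k (by omega) with h | h
        · omega
        · have ha := hαzero t k h
          omega
      · push_neg at hc1
        have ha := hαzero t k (by omega)
        have hb : cntI (β.map (fun x => x + j)) t k + (t - j) ≤ k - j := by
          rw [cntI_map_shift j k (fun b hb => (hβ1 b hb).1) (by omega)]
          rw [cntI_shrink (fun x hx => (hβ1 x hx).2) (by omega)]
          have := cnt_tail_le hβpf (t := t - j) (by omega) (by omega)
          omega
        omega
    have hnov : ∀ v ∈ Vset n R, ¬(j < v ∧ v < k) := by
      rintro v hv ⟨h1, h2⟩
      apply (mem_Vset.1 hv).2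
      refine ⟨j+1, by omega, by omega, ?_⟩
      rw [hdec]
      have hb : v - j ≤ cntI (β.map (fun x => x + j)) (j+1) v := by
        rw [cntI_map_shift_low j v (fun b hb => (hβ1 b hb).1) (by omega)]
        exact isPF_full_lower hβpf hβlen (by omega)
      omega
    refine ⟨hsc, hjV, hkV, hnov, ?_⟩
    have hagree : ∀ t s, 1 ≤ t → t ≤ s → s ≤ j - 1 → cntI R t s = cntI α t s := by
      intro t s ht hts hsj
      rw [hdec, hBzero t s (by omega), hCzero t s (by omega)]
      omega
    have hform : ((Vset n R).filter (fun v => v < j)) = Vset (j-1) α := by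
      rw [← Vset_below (c := j - 1) (n := n) (by omega) hagree]
      apply Finset.filter_congr
      intro v hv
      constructor <;> intro h <;> omega
    rw [hform]
    have hcard := Vset_card (l := α) hαpf.1 (isPF_iff.1 hαpf).2
    omega


open scoped Classical in
lemma case2_iff {m n i k j : ℕ} {R : List ℕ} (hrest : InRange n R) (hlen : R.length + 1 = m)
    (hmn : m < n) (hi1 : 1 ≤ i) (hi2 : i ≤ n - m) (hk1 : i ≤ k)
    (hj1 : 1 ≤ j) (hjk : k < j) (hjn : j ≤ n) :
    (SCp n R ∧ j ∈ Vset n R ∧ k ∈ Vset n R ∧ (∀ v ∈ Vset n R, ¬ j < v) ∧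
      ((Vset n R).filter (fun v => v < k)).card = i - 1) ↔
    (n - m - i + k + 1 ≤ j ∧ ∃ α β γ : List ℕ,
      (IsPF (k - 1) α ∧ α.length = k - i) ∧
      (IsPF (j - k - 1) β ∧ β.length = m + i + j - n - k - 1) ∧
      (IsPF (n - j) γ ∧ γ.length = n - j) ∧
      R.Perm (α ++ β.map (fun x => x + k) ++ γ.map (fun x => x + j))) := by
  have hmi : m + i ≤ n := by omega
  constructor
  · rintro ⟨hsc, hjV, hkV, hnov, hcard⟩
    have hk1' : 1 ≤ k := by omega
    have hnoj : ∀ x ∈ R, x ≠ j := no_elem_of_vac hjV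
    have hnok : ∀ x ∈ R, x ≠ k := no_elem_of_vac hkV
    have hjvac := not_occF_iff.1 (mem_Vset.1 hjV).2
    have hkvac := not_occF_iff.1 (mem_Vset.1 hkV).2
    have hR1 : ∀ x ∈ R, 1 ≤ x := fun x hx => (hrest x hx).1
    have hcardlek : ((Vset n R).filter (fun v => v ≤ k)).card = i := by
      rw [card_filter_le_of_mem hkV]; omega
    have hfilj : (Vset n R).filter (fun v => v ≤ j) = Vset n R := by
      apply Finset.filter_true_of_mem
      intro v hv
      have := hnov v hv
      omega
    have hVcard := Vset_card hrest hsc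
    have hpj := cnt_prefix j hjV
    have hpk := cnt_prefix k hkV
    rw [hcardlek] at hpk
    rw [hfilj] at hpj
    -- cntI R 1 j + (n - m + 1) = j ; cntI R 1 k + i = k
    have hik : i ≤ k := hk1
    set A := R.filter (fun x => decide (x < k)) with hA
    set B := R.filter (fun x => decide (k < x ∧ x < j)) with hB
    set C := R.filter (fun x => decide (j < x)) with hC
    have hAlen : A.length = cntI R 1 k := by
      rw [hA, ← List.countP_eq_length_filter]
      apply List.countP_congr
      intro x hx
      have h1 := hR1 x hx
      have h2 := hnok x hx
      simp only [decide_eq_true_eq]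
      omega
    have hBlen : B.length = cntI R (k+1) j := by
      rw [hB, ← List.countP_eq_length_filter]
      apply List.countP_congr
      intro x hx
      have h2 := hnoj x hx
      simp only [decide_eq_true_eq]
      omega
    have hClen : C.length = cntI R (j+1) n := by
      rw [hC, ← List.countP_eq_length_filter]
      apply List.countP_congr
      intro x hx
      have h1 := (hrest x hx).2
      simp only [decide_eq_true_eq]
      omega
    have hsplit1 : cntI R 1 j = cntI R 1 k + cntI R (k+1) j := cntI_split R (by omega) (by omega)
    have hsplit2 : cntI R 1 n = cntI R 1 j + cntI R (j+1) n := cntI_split R (by omega) (by omega)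
    have htot : cntI R 1 n = R.length := cntI_one_eq_length hrest
    have hAmem : ∀ x ∈ A, x ∈ R ∧ x < k := by
      intro x hx
      rw [hA, List.mem_filter] at hx
      exact ⟨hx.1, of_decide_eq_true hx.2⟩
    have hBmem : ∀ x ∈ B, x ∈ R ∧ k < x ∧ x < j := by
      intro x hx
      rw [hB, List.mem_filter] at hx
      exact ⟨hx.1, of_decide_eq_true hx.2⟩
    have hCmem : ∀ x ∈ C, x ∈ R ∧ j < x := by
      intro x hx
      rw [hC, List.mem_filter] at hx
      exact ⟨hx.1, of_decide_eq_true hx.2⟩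
    refine ⟨by omega, A, B.map (fun x => x - k), C.map (fun x => x - j), ⟨?_, ?_⟩,
      ⟨?_, ?_⟩, ⟨?_, ?_⟩, ?_⟩
    · constructor
      · intro x hx
        obtain ⟨hxR, hxk⟩ := hAmem x hx
        have := hrest x hxR
        omega
      · intro i' hi'
        rw [countP_le_eq_cntI (fun x hx => (hrest x (hAmem x hx).1).1)]
        have hAi' : cntI A 1 i' = cntI R 1 i' := by
          rw [hA, cntI, cntI, List.countP_filter]
          apply List.countP_congr
          intro x hx
          simp only [Bool.and_eq_true, decide_eq_true_eq]
          omega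
        have hsp : cntI R 1 k = cntI R 1 i' + cntI R (i'+1) k := cntI_split R (by omega) (by omega)
        have hv := hkvac (i'+1) (by omega) (by omega)
        rw [hAi']
        omega
    · omega
    · constructor
      · intro b hb
        rw [List.mem_map] at hb
        obtain ⟨x, hx, rfl⟩ := hb
        have := hBmem x hx
        omega
      · intro s hs
        have hcount : (B.map (fun x => x - k)).countP (fun x => decide (x ≤ s))
            = cntI R (k+1) (s+k) := by
          rw [List.countP_map, hB, cntI, List.countP_filter]
          apply List.countP_congr
          intro x hx
          simp only [Function.comp_apply, Bool.and_eq_true, decide_eq_true_eq]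
          omega
        rw [hcount]
        have hlm : (B.map (fun x => x - k)).length = B.length := List.length_map _
        have hsp1 : cntI R 1 (s+k) = cntI R 1 k + cntI R (k+1) (s+k) :=
          cntI_split R (by omega) (by omega)
        have hsp2 : cntI R 1 j = cntI R 1 (s+k) + cntI R (s+k+1) j :=
          cntI_split R (by omega) (by omega)
        have hv := hjvac (s+k+1) (by omega) (by omega)
        omega
    · rw [List.length_map]; omega
    · constructor
      · intro c hc
        rw [List.mem_map] at hc
        obtain ⟨x, hx, rfl⟩ := hc
        have h1 := hCmem x hx
        have h2 := hrest x h1.1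
        omega
      · intro s hs
        have hCrange : ∀ x ∈ C, j + 1 ≤ x ∧ x ≤ n := by
          intro x hx
          have h1 := hCmem x hx
          have h2 := hrest x h1.1
          omega
        have hsplitC : cntI C 1 n = cntI C 1 (s+j) + cntI C (s+j+1) n :=
          cntI_split C (by omega) (by omega)
        have hClenfull : cntI C 1 n = C.length := by
          unfold cntI
          apply List.countP_eq_length.2
          intro x hx
          have := hCrange x hx
          simp only [decide_eq_true_eq]
          omega
        have htail : cntI C (s+j+1) n = cntI R (j+s+1) n := by
          rw [hC, cntI, cntI, List.countP_filter]
          apply List.countP_congr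
          intro x hx
          simp only [Bool.and_eq_true, decide_eq_true_eq]
          omega
        have hcount : (C.map (fun x => x - j)).countP (fun x => decide (x ≤ s))
            = cntI C 1 (s+j) := by
          rw [List.countP_map]
          unfold cntI
          apply List.countP_congr
          intro x hx
          have := hCrange x hx
          simp only [Function.comp_apply, decide_eq_true_eq]
          omega
        rw [hcount, List.length_map]
        have hbound : cntI R (j+s+1) n ≤ n - j - s := by
          by_cases hcase : j + s + 1 ≤ n
          · have := hsc (j+s+1) (by omega) hcase
            omega
          · have : cntI R (j+s+1) n = 0 :=
              cntI_eq_zero (fun x hx => by have := (hrest x hx).2; omega)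
            omega
        omega
    · rw [List.length_map]; omega
    · have hp1 := List.filter_append_perm (fun x => decide (x < k)) R
      set D := R.filter (fun x => !decide (x < k)) with hD
      have hp2 := List.filter_append_perm (fun x => decide (k < x ∧ x < j)) D
      have hDq : D.filter (fun x => decide (k < x ∧ x < j)) = B := by
        rw [hD, List.filter_filter, hB]
        apply List.filter_congr
        intro x hx
        by_cases h : k < x ∧ x < j
        · have hxk : ¬ x < k := by omega
          simp [h, hxk]
        · simp [h]
      have hDnq : D.filter (fun x => !decide (k < x ∧ x < j)) = C := by
        rw [hD, List.filter_filter, hC]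
        apply List.filter_congr
        intro x hx
        have h1 := hnoj x hx
        have h2 := hnok x hx
        by_cases h : j < x
        · have e1 : ¬ (k < x ∧ x < j) := by omega
          have e2 : ¬ x < k := by omega
          simp [h, e1, e2]
        · rcases (show x < k ∨ (k < x ∧ x < j) by omega) with hc | hc
          · simp [hc, h]
          · simp [hc, h]
      have hmapB : (B.map (fun x => x - k)).map (fun x => x + k) = B := by
        rw [List.map_map]
        have : ∀ x ∈ B, ((fun x => x + k) ∘ (fun x => x - k)) x = id x := by
          intro x hx
          have := hBmem x hx
          simp only [Function.comp_apply, id_eq]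
          omega
        rw [List.map_congr_left this, List.map_id]
      have hmapC : (C.map (fun x => x - j)).map (fun x => x + j) = C := by
        rw [List.map_map]
        have : ∀ x ∈ C, ((fun x => x + j) ∘ (fun x => x - j)) x = id x := by
          intro x hx
          have := hCmem x hx
          simp only [Function.comp_apply, id_eq]
          omega
        rw [List.map_congr_left this, List.map_id]
      rw [hmapB, hmapC]
      have hstep : D.Perm (B ++ C) := by
        rw [← hDq, ← hDnq]
        exact hp2.symm
      have hfinal : R.Perm (A ++ (B ++ C)) :=
        hp1.symm.trans (List.Perm.append_left A hstep)
      rw [List.append_assoc]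
      exact hfinal
  · rintro ⟨hjge, α, β, γ, ⟨hαpf, hαlen⟩, ⟨hβpf, hβlen⟩, ⟨hγpf, hγlen⟩, hperm⟩
    have hk1' : 1 ≤ k := by omega
    have hdec := cntI_decomp hperm
    have hα1 : ∀ x ∈ α, 1 ≤ x ∧ x ≤ k - 1 := hαpf.1
    have hβ1 : ∀ x ∈ β, 1 ≤ x ∧ x ≤ j - k - 1 := hβpf.1
    have hγ1 : ∀ x ∈ γ, 1 ≤ x ∧ x ≤ n - j := hγpf.1
    have hBmem : ∀ y ∈ β.map (fun x => x + k), k + 1 ≤ y ∧ y ≤ j - 1 := by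
      intro y hy
      rw [List.mem_map] at hy
      obtain ⟨b, hb, rfl⟩ := hy
      have := hβ1 b hb
      omega
    have hCmem : ∀ y ∈ γ.map (fun x => x + j), j + 1 ≤ y ∧ y ≤ n := by
      intro y hy
      rw [List.mem_map] at hy
      obtain ⟨c, hc, rfl⟩ := hy
      have := hγ1 c hc
      omega
    have hαzero : ∀ t s : ℕ, k ≤ t → cntI α t s = 0 := fun t s ht =>
      cntI_eq_zero (fun x hx => by have := hα1 x hx; omega)
    have hBzero : ∀ t s : ℕ, s ≤ k → cntI (β.map (fun x => x + k)) t s = 0 := fun t s hs =>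
      cntI_eq_zero (fun x hx => by have := hBmem x hx; omega)
    have hBzero' : ∀ t s : ℕ, j ≤ t → cntI (β.map (fun x => x + k)) t s = 0 := fun t s ht =>
      cntI_eq_zero (fun x hx => by have := hBmem x hx; omega)
    have hCzero : ∀ t s : ℕ, s ≤ j → cntI (γ.map (fun x => x + j)) t s = 0 := fun t s hs =>
      cntI_eq_zero (fun x hx => by have := hCmem x hx; omega)
    have hαbound : ∀ t : ℕ, 1 ≤ t → ∀ s : ℕ, k - 1 ≤ s → cntI α t s + t ≤ k ∨ k ≤ t := by
      intro t ht s hsk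
      by_cases htk : k ≤ t
      · exact Or.inr htk
      · left
        rw [cntI_shrink (fun x hx => (hα1 x hx).2) hsk]
        have := cnt_tail_le hαpf ht (by omega)
        omega
    have hβlen2 : β.length + (n + k + 1) = m + i + j := by omega
    have hsc : SCp n R := by
      intro t ht1 htn
      rw [hdec]
      by_cases hc1 : t ≤ k
      · have hb : cntI (β.map (fun x => x + k)) t n ≤ β.length := by
          have := cntI_le_length (β.map (fun x => x + k)) t n
          rw [List.length_map] at this
          omega
        have hc : cntI (γ.map (fun x => x + j)) t n ≤ n - j := by
          have := cntI_le_length (γ.map (fun x => x + j)) t n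
          rw [List.length_map] at this
          omega
        rcases hαbound t ht1 n (by omega) with h | h
        · omega
        · have ha := hαzero t n h
          omega
      · push_neg at hc1
        have ha : cntI α t n = 0 := hαzero t n (by omega)
        by_cases hc2 : t ≤ j
        · have hb : cntI (β.map (fun x => x + k)) t n + (t - k) ≤ j - k := by
            rw [cntI_map_shift k n (fun b hb => (hβ1 b hb).1) (by omega)]
            rw [cntI_shrink (fun x hx => (hβ1 x hx).2) (by omega)]
            have := cnt_tail_le hβpf (t := t - k) (by omega) (by omega)
            omega
          have hc : cntI (γ.map (fun x => x + j)) t n ≤ n - j := by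
            have := cntI_le_length (γ.map (fun x => x + j)) t n
            rw [List.length_map] at this
            omega
          omega
        · push_neg at hc2
          have hb : cntI (β.map (fun x => x + k)) t n = 0 := hBzero' t n (by omega)
          have hc : cntI (γ.map (fun x => x + j)) t n + (t - j) ≤ n - j + 1 := by
            rw [cntI_map_shift j n (fun c hc => (hγ1 c hc).1) (by omega)]
            have := cnt_tail_le hγpf (t := t - j) (by omega) (by omega)
            omega
          omega
    have hkV : k ∈ Vset n R := by
      rw [mem_Vset]
      refine ⟨⟨by omega, by omega⟩, not_occF_iff.2 (fun t ht1 htk => ?_)⟩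
      rw [hdec]
      have hb := hBzero t k (le_refl k)
      have hc := hCzero t k (by omega)
      rcases hαbound t ht1 k (by omega) with h | h
      · omega
      · have ha := hαzero t k h
        omega
    have hjV : j ∈ Vset n R := by
      rw [mem_Vset]
      refine ⟨⟨by omega, hjn⟩, not_occF_iff.2 (fun t ht1 htj => ?_)⟩
      rw [hdec]
      have hc := hCzero t j (le_refl j)
      by_cases hc1 : t ≤ k
      · have hb : cntI (β.map (fun x => x + k)) t j ≤ β.length := by
          have := cntI_le_length (β.map (fun x => x + k)) t j
          rw [List.length_map] at this
          omega
        rcases hαbound t ht1 j (by omega) with h | h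
        · omega
        · have ha := hαzero t j h
          omega
      · push_neg at hc1
        have ha := hαzero t j (by omega)
        have hb : cntI (β.map (fun x => x + k)) t j + (t - k) ≤ j - k := by
          rw [cntI_map_shift k j (fun b hb => (hβ1 b hb).1) (by omega)]
          rw [cntI_shrink (fun x hx => (hβ1 x hx).2) (by omega)]
          have := cnt_tail_le hβpf (t := t - k) (by omega) (by omega)
          omega
        omega
    have hnov : ∀ v ∈ Vset n R, ¬ j < v := by
      intro v hv hjv
      have hvn : v ≤ n := (mem_Vset.1 hv).1.2
      apply (mem_Vset.1 hv).2
      refine ⟨j+1, by omega, by omega, ?_⟩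
      rw [hdec]
      have hc : v - j ≤ cntI (γ.map (fun x => x + j)) (j+1) v := by
        rw [cntI_map_shift_low j v (fun c hc => (hγ1 c hc).1) (by omega)]
        exact isPF_full_lower hγpf hγlen (by omega)
      omega
    refine ⟨hsc, hjV, hkV, hnov, ?_⟩
    have hagree : ∀ t s, 1 ≤ t → t ≤ s → s ≤ k - 1 → cntI R t s = cntI α t s := by
      intro t s ht hts hsk
      rw [hdec, hBzero t s (by omega), hCzero t s (by omega)]
      omega
    have hform : ((Vset n R).filter (fun v => v < k)) = Vset (k-1) α := by
      rw [← Vset_below (c := k - 1) (n := n) (by omega) hagree]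
      apply Finset.filter_congr
      intro v hv
      constructor <;> intro h <;> omega
    rw [hform]
    have hcard := Vset_card (l := α) hαpf.1 (isPF_iff.1 hαpf).2
    omega

end PFaux

/-- Theorem 3.6. Characterization of the maximal first preference `j`
compatible with `π_2, …, π_m` and with the `i`-th unattempted spot being `k`, via
parking function multi-shuffles. -/
theorem stmt_13 (m n i k : ℕ) (hmn : m < n) (hi1 : 1 ≤ i) (hi2 : i ≤ n - m)
    (hk1 : i ≤ k) (hk2 : k ≤ m + i)
    (rest : List ℕ) (hrestlen : rest.length = m - 1) (hrest : InRange n rest)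
    (j : ℕ) (hj1 : 1 ≤ j) (hjn : j ≤ n) :
    ((IsPF n (j :: rest) ∧ (j :: rest).length = m ∧ kspot n (j :: rest) i = k) ∧
      ¬(IsPF n ((j + 1) :: rest) ∧ ((j + 1) :: rest).length = m ∧
          kspot n ((j + 1) :: rest) i = k)) ↔
    ((i ≤ j ∧ j + 1 ≤ k ∧ ∃ α β γ : List ℕ,
        (IsPF (j - 1) α ∧ α.length = j - i) ∧
        (IsPF (k - j - 1) β ∧ β.length = k - j - 1) ∧
        (IsPF (n - k) γ ∧ γ.length = m + i - k) ∧
        rest.Perm (α ++ β.map (fun x => x + j) ++ γ.map (fun x => x + k))) ∨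
      (n - m - i + k + 1 ≤ j ∧ ∃ α β γ : List ℕ,
        (IsPF (k - 1) α ∧ α.length = k - i) ∧
        (IsPF (j - k - 1) β ∧ β.length = m + i + j - n - k - 1) ∧
        (IsPF (n - j) γ ∧ γ.length = n - j) ∧
        rest.Perm (α ++ β.map (fun x => x + k) ++ γ.map (fun x => x + j)))) := by
  rcases Nat.eq_zero_or_pos m with rfl | hm1
  · -- degenerate case m = 0 : both sides are false
    constructor
    · rintro ⟨⟨_, hl, _⟩, -⟩
      simp at hl
    · rintro (⟨hij, hjk, α, β, γ, ⟨_, hαlen⟩, ⟨_, hβlen⟩, ⟨_, hγlen⟩, hperm⟩ |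
        ⟨hjge, α, β, γ, ⟨_, hαlen⟩, ⟨_, hβlen⟩, ⟨_, hγlen⟩, hperm⟩) <;>
      · exfalso
        have hL := hperm.length_eq
        simp only [List.length_append, List.length_map] at hL
        rw [hrestlen] at hL
        omega
  · have hlen : rest.length + 1 = m := by omega
    have hkn : k ≤ n := by omega
    rw [PFaux.LHS_iff_V hrest hlen hi1 hk1 hj1 hjn hkn]
    constructor
    · rintro ⟨hsc, hjV, hkV, (⟨hjk, hnov, hcard⟩ | ⟨hjk, hnov, hcard⟩)⟩
      · exact Or.inl ((PFaux.case1_iff hrest hlen hmn hi1 hi2 hk2 hj1 hjk hkn).1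
          ⟨hsc, hjV, hkV, hnov, hcard⟩)
      · exact Or.inr ((PFaux.case2_iff hrest hlen hmn hi1 hi2 hk1 hj1 hjk hjn).1
          ⟨hsc, hjV, hkV, hnov, hcard⟩)
    · rintro (h | h)
      · have hjk : j < k := by omega
        obtain ⟨hsc, hjV, hkV, hnov, hcard⟩ :=
          (PFaux.case1_iff hrest hlen hmn hi1 hi2 hk2 hj1 hjk hkn).2 h
        exact ⟨hsc, hjV, hkV, Or.inl ⟨hjk, hnov, hcard⟩⟩
      · have hjk : k < j := by
          have := h.1
          omega
        obtain ⟨hsc, hjV, hkV, hnov, hcard⟩ :=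
          (PFaux.case2_iff hrest hlen hmn hi1 hi2 hk1 hj1 hjk hjn).2 h
        exact ⟨hsc, hjV, hkV, Or.inr ⟨hjk, hnov, hcard⟩⟩
end

section
/- Let 0 ≤ m ≤ n be integers and a, b ∈ {1,…,n}^m. Then: (1) a ∈ PF(m,n) if and only if (a, (n,…,n)) ∈ IPF(m,n); and (2) (a,b) ∈ IPF(m,n) if and only if a ∈ PF(m,n) and τ(a) ≤_C b, i.e., τ_i(a) ≤ b_i for all 1 ≤ i ≤ m. -/
open Finset

lemma parkAux_cons (p q : ℕ) (rest : List (ℕ × ℕ)) (occ : Finset ℕ) :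
    parkAux ((p, q) :: rest) occ =
      if h : ((Finset.Icc p q) \ occ).Nonempty then
        (parkAux rest (insert (((Finset.Icc p q) \ occ).min' h) occ)).map
          (fun t => ((Finset.Icc p q) \ occ).min' h :: t)
      else none := rfl

/-- Key characterization: classical parking (all upper bounds `n`) starting from an
occupied set `occ ⊆ [1,n]` succeeds iff for every `i` the number of preferences
exceeding `i` is at most the number of free spots in `(i, n]`. -/
lemma park_succ_iff (n : ℕ) : ∀ (l : List ℕ) (occ : Finset ℕ),
    (∀ x ∈ l, 1 ≤ x) → occ ⊆ Finset.Icc 1 n →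
    ((parkAux (l.map (fun p => (p, n))) occ).isSome ↔
      ∀ i, (l.countP (fun x => decide (i < x))) ≤ ((Finset.Ioc i n) \ occ).card)
  | [], occ, _, _ => by simp [parkAux]
  | p :: rest, occ, hl, hocc => by
      have hp : 1 ≤ p := (hl p (by simp))
      have hIoc : Finset.Ioc (p - 1) n = Finset.Icc p n := by
        have : Finset.Icc ((p-1)+1) n = Finset.Ioc (p-1) n := Finset.Icc_add_one_left_eq_Ioc _ _
        rw [← this, show p - 1 + 1 = p by omega]
      rw [List.map_cons, parkAux_cons]
      by_cases h : ((Finset.Icc p n) \ occ).Nonempty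
      · set s := ((Finset.Icc p n) \ occ).min' h with hs
        have hsmem : s ∈ (Finset.Icc p n) \ occ := Finset.min'_mem _ h
        have hsm := Finset.mem_sdiff.1 hsmem
        have hsp : p ≤ s := (Finset.mem_Icc.1 hsm.1).1
        have hsn : s ≤ n := (Finset.mem_Icc.1 hsm.1).2
        have hocc' : insert s occ ⊆ Finset.Icc 1 n := by
          intro x hx
          rcases Finset.mem_insert.1 hx with rfl | hx
          · exact Finset.mem_Icc.2 ⟨le_trans hp hsp, hsn⟩
          · exact hocc hx
        have IH := park_succ_iff n rest (insert s occ)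
          (fun x hx => hl x (by simp [hx])) hocc'
        rw [dif_pos h]
        have cardlt : ∀ i, i < s →
            ((Finset.Ioc i n) \ insert s occ).card + 1 = ((Finset.Ioc i n) \ occ).card := by
          intro i hi
          have hmem : s ∈ (Finset.Ioc i n) \ occ :=
            Finset.mem_sdiff.2 ⟨Finset.mem_Ioc.2 ⟨hi, hsn⟩, hsm.2⟩
          rw [Finset.sdiff_insert, Finset.card_erase_add_one hmem]
        have cardge : ∀ i, s ≤ i →
            ((Finset.Ioc i n) \ insert s occ) = ((Finset.Ioc i n) \ occ) := by
          intro i hi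
          rw [Finset.sdiff_insert, Finset.erase_eq_of_notMem]
          intro hmem
          have := (Finset.mem_Ioc.1 (Finset.mem_sdiff.1 hmem).1).1
          omega
        have hmid : ∀ i, p - 1 ≤ i → i < s →
            ((Finset.Ioc i n) \ occ) = ((Finset.Icc p n) \ occ) := by
          intro i h1 h2
          ext x
          simp only [Finset.mem_sdiff, Finset.mem_Ioc, Finset.mem_Icc]
          constructor
          · rintro ⟨⟨hx1, hx2⟩, hx3⟩; exact ⟨⟨by omega, hx2⟩, hx3⟩
          · rintro ⟨⟨hx1, hx2⟩, hx3⟩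
            have : s ≤ x := Finset.min'_le _ _ (Finset.mem_sdiff.2
              ⟨Finset.mem_Icc.2 ⟨hx1, hx2⟩, hx3⟩)
            exact ⟨⟨by omega, hx2⟩, hx3⟩
        simp only [Option.isSome_map]
        rw [IH]
        constructor
        · intro H i
          rw [List.countP_cons]
          rcases le_or_gt s i with hsi | his
          · have hip : ¬ (i < p) := by omega
            simp only [hip, decide_false, Bool.false_eq_true, if_false, Nat.add_zero]
            calc rest.countP (fun x => decide (i < x))
                ≤ ((Finset.Ioc i n) \ insert s occ).card := H i
              _ = ((Finset.Ioc i n) \ occ).card := by rw [cardge i hsi]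
          · rcases lt_or_ge i p with hip | hip
            · simp only [hip, decide_true, if_true]
              have := H i
              have hc := cardlt i his
              omega
            · simp only [show ¬ (i < p) by omega, decide_false, Bool.false_eq_true, if_false, Nat.add_zero]
              have := H i
              have hc := cardlt i his
              omega
        · intro H i
          rcases le_or_gt s i with hsi | his
          · rw [cardge i hsi]
            calc rest.countP (fun x => decide (i < x))
                ≤ (p :: rest).countP (fun x => decide (i < x)) := by
                  rw [List.countP_cons]; omega
              _ ≤ _ := H i
          · have hc := cardlt i his
            rcases lt_or_ge i p with hip | hip
            · have := H i
              rw [List.countP_cons] at this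
              simp only [hip, decide_true, if_true] at this
              omega
            · -- p ≤ i < s
              have h1 : ((Finset.Ioc i n) \ occ) = ((Finset.Icc p n) \ occ) :=
                hmid i (by omega) his
              have h2 : ((Finset.Ioc (p-1) n) \ occ) = ((Finset.Icc p n) \ occ) := by
                rw [hIoc]
              have hmono : rest.countP (fun x => decide (i < x)) ≤
                  rest.countP (fun x => decide (p - 1 < x)) := by
                apply List.countP_mono_left
                intro x _ hx
                simp only [decide_eq_true_eq] at *
                omega
              have := H (p - 1)
              rw [List.countP_cons] at this
              simp only [show p - 1 < p by omega, decide_true, if_true] at this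
              rw [h2] at this
              rw [← h1] at this
              have hc' := cardlt i his
              omega
      · rw [dif_neg h]
        simp only [Option.isSome_none, Bool.false_eq_true, false_iff, not_forall, not_le]
        refine ⟨p - 1, ?_⟩
        have hempty : ((Finset.Ioc (p-1) n) \ occ).card = 0 := by
          rw [hIoc]
          simp [Finset.not_nonempty_iff_eq_empty.1 h]
        rw [hempty, List.countP_cons]
        simp [show p - 1 < p by omega]

lemma min_sdiff_eq (p q n : ℕ) (occ : Finset ℕ) (hq : q ≤ n)
    (h : ((Finset.Icc p q) \ occ).Nonempty) :
    ∃ hb : ((Finset.Icc p n) \ occ).Nonempty,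
      ((Finset.Icc p n) \ occ).min' hb = ((Finset.Icc p q) \ occ).min' h := by
  have hsub : (Finset.Icc p q) \ occ ⊆ (Finset.Icc p n) \ occ := by
    intro x hx
    have := Finset.mem_sdiff.1 hx
    have := Finset.mem_Icc.1 this.1
    exact Finset.mem_sdiff.2 ⟨Finset.mem_Icc.2 ⟨this.1, le_trans this.2 hq⟩,
      (Finset.mem_sdiff.1 hx).2⟩
  have hb : ((Finset.Icc p n) \ occ).Nonempty := h.mono hsub
  refine ⟨hb, ?_⟩
  set t := ((Finset.Icc p q) \ occ).min' h with ht
  have htmem : t ∈ (Finset.Icc p q) \ occ := Finset.min'_mem _ h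
  have h1 : ((Finset.Icc p n) \ occ).min' hb ≤ t := Finset.min'_le _ _ (hsub htmem)
  have h2 : t ≤ ((Finset.Icc p n) \ occ).min' hb := by
    apply Finset.min'_le
    have hm := Finset.mem_sdiff.1 (Finset.min'_mem _ hb)
    have hm1 := Finset.mem_Icc.1 hm.1
    have htq : t ≤ q := (Finset.mem_Icc.1 (Finset.mem_sdiff.1 htmem).1).2
    exact Finset.mem_sdiff.2 ⟨Finset.mem_Icc.2 ⟨hm1.1, le_trans h1 htq⟩, hm.2⟩
  omega

/-- The interval process with bounds `b ≤ n` parks exactly like the classical process,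
and succeeds iff the classical outcome is componentwise `≤ b`. -/
lemma park_zip (n : ℕ) : ∀ (a b t : List ℕ) (occ : Finset ℕ),
    a.length = b.length → (∀ x ∈ b, x ≤ n) →
    (parkAux (a.zip b) occ = some t ↔
      (parkAux (a.map (fun p => (p, n))) occ = some t ∧ List.Forall₂ (· ≤ ·) t b))
  | [], b, t, occ, hlen, hb => by
      have : b = [] := by
        cases b with
        | nil => rfl
        | cons x xs => simp at hlen
      subst this
      constructor
      · intro h
        simp [parkAux] at h
        subst h
        exact ⟨by simp [parkAux], List.Forall₂.nil⟩
      · rintro ⟨h1, h2⟩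
        simp [parkAux] at h1 ⊢
        cases h2
        exact h1.symm ▸ rfl
  | p :: a', b, t, occ, hlen, hb => by
      cases b with
      | nil => simp at hlen
      | cons q b' =>
        have hq : q ≤ n := hb q (by simp)
        have hb' : ∀ x ∈ b', x ≤ n := fun x hx => hb x (by simp [hx])
        have hlen' : a'.length = b'.length := by simpa using hlen
        rw [List.zip_cons_cons, List.map_cons, parkAux_cons, parkAux_cons]
        constructor
        · intro hsome
          by_cases h : ((Finset.Icc p q) \ occ).Nonempty
          · rw [dif_pos h] at hsome
            obtain ⟨hbig, hmin⟩ := min_sdiff_eq p q n occ hq h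
            set s := ((Finset.Icc p q) \ occ).min' h with hs
            obtain ⟨t', ht', rfl⟩ : ∃ t', parkAux (a'.zip b') (insert s occ) = some t' ∧
                t = s :: t' := by
              cases he : parkAux (a'.zip b') (insert s occ) with
              | none => rw [he] at hsome; simp at hsome
              | some u => rw [he] at hsome; simp at hsome; exact ⟨u, rfl, hsome.symm⟩
            have IH := (park_zip n a' b' t' (insert s occ) hlen' hb').1 ht'
            rw [dif_pos hbig, hmin]
            refine ⟨?_, ?_⟩
            · rw [IH.1]; rfl
            · refine List.Forall₂.cons ?_ IH.2
              exact (Finset.mem_Icc.1 (Finset.mem_sdiff.1 (Finset.min'_mem _ h)).1).2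
          · rw [dif_neg h] at hsome; simp at hsome
        · rintro ⟨hsome, htb⟩
          by_cases hbig : ((Finset.Icc p n) \ occ).Nonempty
          · rw [dif_pos hbig] at hsome
            set s := ((Finset.Icc p n) \ occ).min' hbig with hs
            obtain ⟨t', ht', rfl⟩ : ∃ t', parkAux (a'.map (fun p => (p, n))) (insert s occ)
                = some t' ∧ t = s :: t' := by
              cases he : parkAux (a'.map (fun p => (p, n))) (insert s occ) with
              | none => rw [he] at hsome; simp at hsome
              | some u => rw [he] at hsome; simp at hsome; exact ⟨u, rfl, hsome.symm⟩
            obtain ⟨hsq, htb'⟩ : s ≤ q ∧ List.Forall₂ (· ≤ ·) t' b' := by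
              cases htb with
              | cons h1 h2 => exact ⟨h1, h2⟩
            have hsmem := Finset.mem_sdiff.1 (Finset.min'_mem _ hbig)
            have hsp : p ≤ s := (Finset.mem_Icc.1 hsmem.1).1
            have h : ((Finset.Icc p q) \ occ).Nonempty :=
              ⟨s, Finset.mem_sdiff.2 ⟨Finset.mem_Icc.2 ⟨hsp, hsq⟩, hsmem.2⟩⟩
            obtain ⟨hbig2, hmin⟩ := min_sdiff_eq p q n occ hq h
            have hmin' : ((Finset.Icc p q) \ occ).min' h = s := by
              rw [← hmin]
            rw [dif_pos h, hmin']
            rw [(park_zip n a' b' t' (insert s occ) hlen' hb').2 ⟨ht', htb'⟩]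
            rfl
          · rw [dif_neg hbig] at hsome; simp at hsome

/-- Each car parks at a spot at least its preference. -/
lemma park_ge (n : ℕ) : ∀ (a t : List ℕ) (occ : Finset ℕ),
    parkAux (a.map (fun p => (p, n))) occ = some t → List.Forall₂ (· ≤ ·) a t
  | [], t, occ, h => by
      simp [parkAux] at h; subst h; exact List.Forall₂.nil
  | p :: a', t, occ, h => by
      rw [List.map_cons, parkAux_cons] at h
      by_cases hne : ((Finset.Icc p n) \ occ).Nonempty
      · rw [dif_pos hne] at h
        set s := ((Finset.Icc p n) \ occ).min' hne with hs
        obtain ⟨t', ht', rfl⟩ : ∃ t', parkAux (a'.map (fun p => (p, n))) (insert s occ)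
            = some t' ∧ t = s :: t' := by
          cases he : parkAux (a'.map (fun p => (p, n))) (insert s occ) with
          | none => rw [he] at h; simp at h
          | some u => rw [he] at h; simp at h; exact ⟨u, rfl, h.symm⟩
        refine List.Forall₂.cons ?_ (park_ge n a' t' (insert s occ) ht')
        exact (Finset.mem_Icc.1 (Finset.mem_sdiff.1 (Finset.min'_mem _ hne)).1).1
      · rw [dif_neg hne] at h; simp at h

lemma forall₂_le_trans : ∀ {x y z : List ℕ},
    List.Forall₂ (· ≤ ·) x y → List.Forall₂ (· ≤ ·) y z → List.Forall₂ (· ≤ ·) x z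
  | [], [], [], _, _ => List.Forall₂.nil
  | _ :: _, _ :: _, _ :: _, List.Forall₂.cons h1 h2, List.Forall₂.cons h3 h4 =>
      List.Forall₂.cons (le_trans h1 h3) (forall₂_le_trans h2 h4)

lemma zip_replicate (c : ℕ) : ∀ (a : List ℕ),
    a.zip (List.replicate a.length c) = a.map (fun p => (p, c))
  | [] => rfl
  | x :: xs => by
      simp only [List.length_cons, List.replicate_succ, List.zip_cons_cons, List.map_cons]
      rw [zip_replicate c xs]

lemma forall₂_le_replicate (n : ℕ) : ∀ (a : List ℕ), (∀ x ∈ a, x ≤ n) →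
    List.Forall₂ (· ≤ ·) a (List.replicate a.length n)
  | [], _ => List.Forall₂.nil
  | x :: xs, h => by
      simp only [List.length_cons, List.replicate_succ]
      exact List.Forall₂.cons (h x (by simp))
        (forall₂_le_replicate n xs (fun y hy => h y (by simp [hy])))

lemma count_equiv (n : ℕ) (a : List ℕ) (ha : InRange n a) :
    (∀ i ≤ n, a.length + i - n ≤ a.countP (fun x => decide (x ≤ i))) ↔
    (∀ i, a.countP (fun x => decide (i < x)) ≤ ((Finset.Ioc i n) \ (∅ : Finset ℕ)).card) := by
  have key : ∀ (l : List ℕ) (i : ℕ), l.countP (fun x => decide (i < x)) + l.countP (fun x => decide (x ≤ i))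
      = l.length := by
    intro a i
    induction a with
    | nil => simp
    | cons x l ih =>
      rw [List.countP_cons, List.countP_cons, List.length_cons]
      by_cases h : i < x
      · have e1 : decide (i < x) = true := by simp [h]
        have e2 : decide (x ≤ i) = false := by simp; omega
        rw [e1, e2]
        simp only [if_true, if_false, Bool.false_eq_true]
        omega
      · have e1 : decide (i < x) = false := by simp; omega
        have e2 : decide (x ≤ i) = true := by simp; omega
        rw [e1, e2]
        simp only [if_true, if_false, Bool.false_eq_true]
        omega
  have cardeq : ∀ i, ((Finset.Ioc i n) \ (∅ : Finset ℕ)).card = n - i := by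
    intro i; rw [Finset.sdiff_empty, Nat.card_Ioc]
  constructor
  · intro H i
    rw [cardeq]
    by_cases hi : i ≤ n
    · have := H i hi
      have := key a i
      omega
    · have hz : a.countP (fun x => decide (i < x)) = 0 := by
        rw [List.countP_eq_zero]
        intro x hx
        have := (ha x hx).2
        simp only [decide_eq_true_eq]
        omega
      omega
  · intro H i hi
    have := H i
    rw [cardeq] at this
    have := key a i
    omega

/-- Proposition 4.1. (1) `a ∈ PF(m,n)` iff `(a, (n,…,n)) ∈ IPF(m,n)`;
(2) `(a,b) ∈ IPF(m,n)` iff `a ∈ PF(m,n)` and the parking outcome `τ(a)` satisfies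
`τ(a) ≤_C b` componentwise. -/
theorem stmt_17 (m n : ℕ) (hmn : m ≤ n) (a b : List ℕ)
    (halen : a.length = m) (hblen : b.length = m)
    (ha : InRange n a) (hb : InRange n b) :
    (IsPF n a ↔ IsIPF n a (List.replicate m n)) ∧
    (IsIPF n a b ↔
      IsPF n a ∧ ∃ t : List ℕ, outcome n a = some t ∧ List.Forall₂ (· ≤ ·) t b) := by
  have ha1 : ∀ x ∈ a, 1 ≤ x := fun x hx => (ha x hx).1
  have hPF : IsPF n a ↔ (parkAux (a.map (fun p => (p, n))) ∅).isSome = true := by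
    rw [park_succ_iff n a ∅ ha1 (by simp)]
    constructor
    · intro hpf
      exact (count_equiv n a ha).1 hpf.2
    · intro hc
      exact ⟨ha, (count_equiv n a ha).2 hc⟩
  have hbn : ∀ x ∈ b, x ≤ n := fun x hx => (hb x hx).2
  constructor
  · -- Part (1)
    constructor
    · intro hpf
      refine ⟨by simp [halen], ha, ?_, ?_, ?_⟩
      · intro x hx
        obtain ⟨hm0, hxn⟩ := List.mem_replicate.1 hx
        have hane : a ≠ [] := by
          intro hnil
          rw [hnil] at halen
          exact hm0 halen.symm
        obtain ⟨y, hy⟩ := List.exists_mem_of_ne_nil a hane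
        have h1n : 1 ≤ n := le_trans (ha y hy).1 (ha y hy).2
        omega
      · rw [← halen]
        exact forall₂_le_replicate n a (fun x hx => (ha x hx).2)
      · rw [← halen, zip_replicate n a]
        exact hPF.1 hpf
    · intro hipf
      apply hPF.2
      have := hipf.2.2.2.2
      rwa [← halen, zip_replicate n a] at this
  · -- Part (2)
    constructor
    · intro hipf
      obtain ⟨hlen2, _, _, hab, hsome⟩ := hipf
      obtain ⟨t, ht⟩ := Option.isSome_iff_exists.1 hsome
      obtain ⟨hmap, htb⟩ := (park_zip n a b t ∅ hlen2 hbn).1 ht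
      refine ⟨hPF.2 (by rw [hmap]; rfl), t, hmap, htb⟩
    · rintro ⟨hpf, t, ht, htb⟩
      have hmap : parkAux (a.map (fun p => (p, n))) ∅ = some t := ht
      have hat : List.Forall₂ (· ≤ ·) a t := park_ge n a t ∅ hmap
      have hab : List.Forall₂ (· ≤ ·) a b := forall₂_le_trans hat htb
      have hlen2 : a.length = b.length := hab.length_eq
      refine ⟨hlen2, ha, hb, hab, ?_⟩
      rw [(park_zip n a b t ∅ hlen2 hbn).2 ⟨hmap, htb⟩]
      rfl
end
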